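/- arXiv:2502.05355 — 4 statements merged into one kernel-verified Lean document; each statement's English description precedes it below -/
import Mathlib

section
/- Assume NGMRES(m) with window size m ≥ 1, full AA, and GMRES are applied to Ax = b with the same initial guess x_0 ≠ x*, that A ∈ R^{n×n} is invertible, and that A is either symmetric or shifted skew-symmetric of the form A = αI + S with S skew-symmetric. Assume for some k_0 > 0 that r_{k_0−1}^G ≠ 0 and ‖r_{k−1}^G‖₂ > ‖r_k^G‖₂ for each k with 0 < k < k_0. Then for all 0 ≤ j ≤ k_0 and every positive integer m, x_j^{NG(m)} = x_j^G, and x_{j+1}^A = q(x_j^{NG(m)}) = x_j^{NG(m)} − r_j^{NG(m)}. -/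
open Matrix Filter

noncomputable section

/-- The residual `r(x) = A x - b` of the linear system `A x = b`. -/
def residv {n : ℕ} (A : Matrix (Fin n) (Fin n) ℝ) (b x : Fin n → ℝ) : Fin n → ℝ :=
  A.mulVec x - b

/-- The Euclidean 2-norm on `Fin n → ℝ`. -/
def norm2 {n : ℕ} (x : Fin n → ℝ) : ℝ := Real.sqrt (x ⬝ᵥ x)

/-- The fixed-point map `q(x) = M x + b` with `M = I - A`. -/
def qmap {n : ℕ} (A : Matrix (Fin n) (Fin n) ℝ) (b x : Fin n → ℝ) : Fin n → ℝ :=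
  (1 - A).mulVec x + b

/-- One NGMRES update from step `k`, with window `mk` and coefficients `β`:
`x_{k+1} = q(x_k) + ∑_{i=0}^{mk} β_i (q(x_k) - x_{k-i})`. -/
def ngmresUpdate {n : ℕ} (A : Matrix (Fin n) (Fin n) ℝ) (b : Fin n → ℝ)
    (x : ℕ → Fin n → ℝ) (β : ℕ → ℝ) (k mk : ℕ) : Fin n → ℝ :=
  qmap A b (x k) + ∑ i ∈ Finset.range (mk + 1), β i • (qmap A b (x k) - x (k - i))

/-- The NGMRES iteration with window function `mk` (e.g. `mk k = min k m` for NGMRES(m),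
`mk k = k` for full NGMRES): each step uses coefficients minimizing the 2-norm of the
next residual. -/
def IsNGMRES {n : ℕ} (A : Matrix (Fin n) (Fin n) ℝ) (b x0 : Fin n → ℝ) (mk : ℕ → ℕ)
    (x : ℕ → Fin n → ℝ) (β : ℕ → ℕ → ℝ) : Prop :=
  x 0 = x0 ∧ ∀ k, x (k + 1) = ngmresUpdate A b x (β k) k (mk k) ∧
    ∀ β' : ℕ → ℝ, norm2 (residv A b (x (k + 1))) ≤
      norm2 (residv A b (ngmresUpdate A b x β' k (mk k)))

/-- The Krylov subspace `span {r0, A r0, …, A^{k-1} r0}`. -/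
def krylov {n : ℕ} (A : Matrix (Fin n) (Fin n) ℝ) (r0 : Fin n → ℝ) (k : ℕ) :
    Submodule ℝ (Fin n → ℝ) :=
  Submodule.span ℝ {v | ∃ i < k, v = (A ^ i).mulVec r0}

/-- GMRES: `x_k` minimizes the residual 2-norm over the affine space `x0 + K_k`. -/
def IsGMRES {n : ℕ} (A : Matrix (Fin n) (Fin n) ℝ) (b x0 : Fin n → ℝ)
    (x : ℕ → Fin n → ℝ) : Prop :=
  x 0 = x0 ∧ ∀ k, x k - x0 ∈ krylov A (residv A b x0) k ∧
    ∀ y : Fin n → ℝ, y - x0 ∈ krylov A (residv A b x0) k →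
      norm2 (residv A b (x k)) ≤ norm2 (residv A b y)

/-- One Anderson acceleration update from step `k`, with window `mk`:
`x_{k+1} = q(x_k) + ∑_{i=1}^{mk} γ_i (q(x_k) - q(x_{k-i}))`. -/
def aaUpdate {n : ℕ} (A : Matrix (Fin n) (Fin n) ℝ) (b : Fin n → ℝ)
    (x : ℕ → Fin n → ℝ) (γ : ℕ → ℝ) (k mk : ℕ) : Fin n → ℝ :=
  qmap A b (x k) + ∑ i ∈ Finset.Icc 1 mk, γ i • (qmap A b (x k) - qmap A b (x (k - i)))

/-- The Anderson acceleration least-squares objective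
`r(x_k) + ∑_{i=1}^{mk} γ_i (r(x_k) - r(x_{k-i}))`. -/
def aaObj {n : ℕ} (A : Matrix (Fin n) (Fin n) ℝ) (b : Fin n → ℝ)
    (x : ℕ → Fin n → ℝ) (γ : ℕ → ℝ) (k mk : ℕ) : Fin n → ℝ :=
  residv A b (x k) + ∑ i ∈ Finset.Icc 1 mk, γ i • (residv A b (x k) - residv A b (x (k - i)))

/-- Anderson acceleration with window function `mk`. -/
def IsAA {n : ℕ} (A : Matrix (Fin n) (Fin n) ℝ) (b x0 : Fin n → ℝ) (mk : ℕ → ℕ)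
    (x : ℕ → Fin n → ℝ) (γ : ℕ → ℕ → ℝ) : Prop :=
  x 0 = x0 ∧ ∀ k, x (k + 1) = aaUpdate A b x (γ k) k (mk k) ∧
    ∀ γ' : ℕ → ℝ, norm2 (aaObj A b x (γ k) k (mk k)) ≤ norm2 (aaObj A b x γ' k (mk k))

/-- The spectral norm `‖A‖₂` (the ℓ²→ℓ² operator norm). -/
def specNorm {n : ℕ} (A : Matrix (Fin n) (Fin n) ℝ) : ℝ :=
  ‖LinearMap.toContinuousLinearMap (Matrix.toEuclideanLin A)‖

/-- The spectral radius of a real matrix (computed over `ℂ`). -/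
def specRad {n : ℕ} (M : Matrix (Fin n) (Fin n) ℝ) : ℝ :=
  (spectralRadius ℂ (M.map Complex.ofReal)).toReal

namespace Stmt13

variable {n : ℕ}

abbrev V (n : ℕ) := Fin n → ℝ

lemma dot_self_nonneg (v : V n) : 0 ≤ v ⬝ᵥ v :=
  Finset.sum_nonneg fun _ _ => mul_self_nonneg _

lemma norm2_nonneg (v : V n) : 0 ≤ norm2 v := Real.sqrt_nonneg _

lemma norm2_sq (v : V n) : norm2 v ^ 2 = v ⬝ᵥ v := Real.sq_sqrt (dot_self_nonneg v)

lemma norm2_le_norm2 {x y : V n} (h : x ⬝ᵥ x ≤ y ⬝ᵥ y) : norm2 x ≤ norm2 y :=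
  Real.sqrt_le_sqrt h

lemma dot_le_dot_of_norm2 {x y : V n} (h : norm2 x ≤ norm2 y) : x ⬝ᵥ x ≤ y ⬝ᵥ y := by
  have h1 := norm2_sq x; have h2 := norm2_sq y
  have h3 := norm2_nonneg x; have h4 := norm2_nonneg y
  nlinarith

lemma dot_lt_dot_of_norm2 {x y : V n} (h : norm2 x < norm2 y) : x ⬝ᵥ x < y ⬝ᵥ y := by
  have h1 := norm2_sq x; have h2 := norm2_sq y
  have h3 := norm2_nonneg x; have h4 := norm2_nonneg y
  nlinarith

lemma dot_self_pos {v : V n} (h : v ≠ 0) : 0 < v ⬝ᵥ v :=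
  lt_of_le_of_ne (dot_self_nonneg v) fun h0 => h (dotProduct_self_eq_zero.mp h0.symm)

lemma eq_zero_of_dot_self {v : V n} (h : v ⬝ᵥ v = 0) : v = 0 :=
  dotProduct_self_eq_zero.mp h

/-- `⟨v, A w⟩ = ⟨Aᵀ v, w⟩`. -/
lemma dot_mulVec (A : Matrix (Fin n) (Fin n) ℝ) (v w : V n) :
    v ⬝ᵥ A.mulVec w = Aᵀ.mulVec v ⬝ᵥ w := by
  rw [Matrix.dotProduct_mulVec, Matrix.mulVec_transpose]

lemma dot_zero_of_span {v : V n} {s : Set (V n)} (hg : ∀ u ∈ s, v ⬝ᵥ u = 0) :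
    ∀ u ∈ Submodule.span ℝ s, v ⬝ᵥ u = 0 := by
  intro x h
  induction h using Submodule.span_induction with
  | mem u hu => exact hg u hu
  | zero => simp
  | add u w _ _ h1 h2 => rw [dotProduct_add, h1, h2, add_zero]
  | smul t u _ h1 => rw [dotProduct_smul, h1, smul_zero]

/-- residual is affine: `r(x+w) = r(x) + A w`. -/
lemma residv_add (A : Matrix (Fin n) (Fin n) ℝ) (b x w : V n) :
    residv A b (x + w) = residv A b x + A.mulVec w := by
  simp [residv, Matrix.mulVec_add]; abel

lemma residv_sub (A : Matrix (Fin n) (Fin n) ℝ) (b x y : V n) :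
    residv A b x - residv A b y = A.mulVec (x - y) := by
  simp [residv, Matrix.mulVec_sub]

lemma qmap_eq (A : Matrix (Fin n) (Fin n) ℝ) (b x : V n) :
    qmap A b x = x - residv A b x := by
  simp [qmap, residv, Matrix.sub_mulVec, Matrix.one_mulVec]; abel

lemma qmap_sub (A : Matrix (Fin n) (Fin n) ℝ) (b x y : V n) :
    qmap A b x - qmap A b y = (1 - A).mulVec (x - y) := by
  simp [qmap, Matrix.mulVec_sub]

lemma qmap_add (A : Matrix (Fin n) (Fin n) ℝ) (b x w : V n) :
    qmap A b (x + w) = qmap A b x + (1 - A).mulVec w := by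
  simp [qmap, Matrix.mulVec_add]; abel

lemma mulVec_cancel {A : Matrix (Fin n) (Fin n) ℝ} (hA : IsUnit A.det) {w : V n}
    (h : A.mulVec w = 0) : w = 0 := by
  have h1 : (A⁻¹ * A).mulVec w = w := by rw [Matrix.nonsing_inv_mul A hA, Matrix.one_mulVec]
  rw [← Matrix.mulVec_mulVec, h, Matrix.mulVec_zero] at h1
  exact h1.symm

end Stmt13
namespace Stmt13

variable {n : ℕ} {A : Matrix (Fin n) (Fin n) ℝ} {b x0 : V n}

/-- quadratic trick: if `0 ≤ 2tc + t²s` for all `t` with `s ≥ 0`, then `c = 0`. -/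
lemma quad_zero {c s : ℝ} (hs : 0 ≤ s) (h : ∀ t : ℝ, 0 ≤ 2 * t * c + t ^ 2 * s) : c = 0 := by
  have ht := h (-(c / (s + 1)))
  have hs1 : 0 < s + 1 := by linarith
  have key : 2 * (-(c / (s + 1))) * c + (-(c / (s + 1))) ^ 2 * s =
      -(c ^ 2 * (s + 2)) / (s + 1) ^ 2 := by field_simp; ring
  rw [key] at ht
  have h2 : 0 < (s + 1) ^ 2 := by positivity
  have h3 : 0 ≤ -(c ^ 2 * (s + 2)) := by
    by_contra hc
    push_neg at hc
    exact absurd ht (not_le.mpr (div_neg_of_neg_of_pos hc h2))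
  nlinarith [sq_nonneg c]

/-- minimality over an affine subspace implies residual orthogonality to `A W`. -/
lemma min_imp_orth {W : Submodule ℝ (V n)} {x : V n} (hx : x - x0 ∈ W)
    (hmin : ∀ z : V n, z - x0 ∈ W → norm2 (residv A b x) ≤ norm2 (residv A b z)) :
    ∀ w ∈ W, residv A b x ⬝ᵥ A.mulVec w = 0 := by
  intro w hw
  set r := residv A b x with hr
  set u := A.mulVec w with hu
  apply quad_zero (dot_self_nonneg u)
  intro t
  have hz : (x + t • w) - x0 ∈ W := by
    have : (x + t • w) - x0 = (x - x0) + t • w := by abel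
    rw [this]; exact W.add_mem hx (W.smul_mem t hw)
  have h1 := dot_le_dot_of_norm2 (hmin _ hz)
  rw [residv_add] at h1
  have hAtw : A.mulVec (t • w) = t • u := by rw [hu, Matrix.mulVec_smul]
  rw [hAtw] at h1
  have expand : (r + t • u) ⬝ᵥ (r + t • u) = r ⬝ᵥ r + (2 * t * (r ⬝ᵥ u) + t ^ 2 * (u ⬝ᵥ u)) := by
    simp [dotProduct_add, add_dotProduct, dotProduct_smul,
      smul_dotProduct, dotProduct_comm u r]
    ring
  rw [expand] at h1
  linarith

/-- orthogonality implies minimality (Pythagoras). -/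
lemma orth_imp_min {W : Submodule ℝ (V n)} {x : V n} (hx : x - x0 ∈ W)
    (horth : ∀ w ∈ W, residv A b x ⬝ᵥ A.mulVec w = 0) :
    ∀ z : V n, z - x0 ∈ W → norm2 (residv A b x) ≤ norm2 (residv A b z) := by
  intro z hz
  have hzx : z - x ∈ W := by
    have : z - x = (z - x0) - (x - x0) := by abel
    rw [this]; exact W.sub_mem hz hx
  apply norm2_le_norm2
  have hres : residv A b z = residv A b x + A.mulVec (z - x) := by
    have h := residv_sub A b z x
    have : residv A b z = (residv A b z - residv A b x) + residv A b x := by abel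
    rw [this, h]; abel
  rw [hres]
  have hc := horth _ hzx
  set r := residv A b x
  set u := A.mulVec (z - x)
  have expand : (r + u) ⬝ᵥ (r + u) = r ⬝ᵥ r + 2 * (r ⬝ᵥ u) + u ⬝ᵥ u := by
    simp [dotProduct_add, add_dotProduct, dotProduct_comm u r]
    ring
  rw [expand, hc]
  have := dot_self_nonneg u
  linarith

/-- the minimizer over an affine subspace is unique (for invertible `A`). -/
lemma min_unique (hA : IsUnit A.det) {W : Submodule ℝ (V n)} {x y : V n}
    (hx : x - x0 ∈ W) (hy : y - x0 ∈ W)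
    (hxm : ∀ z : V n, z - x0 ∈ W → norm2 (residv A b x) ≤ norm2 (residv A b z))
    (hym : ∀ z : V n, z - x0 ∈ W → norm2 (residv A b y) ≤ norm2 (residv A b z)) :
    x = y := by
  have hxy : x - y ∈ W := by
    have : x - y = (x - x0) - (y - x0) := by abel
    rw [this]; exact W.sub_mem hx hy
  have h1 := min_imp_orth (b := b) hx hxm _ hxy
  have h2 := min_imp_orth (b := b) hy hym _ hxy
  have h3 : (residv A b x - residv A b y) ⬝ᵥ A.mulVec (x - y) = 0 := by
    rw [sub_dotProduct, h1, h2, sub_zero]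
  rw [residv_sub] at h3
  have h4 : x - y = 0 := mulVec_cancel hA (eq_zero_of_dot_self h3)
  have : x = (x - y) + y := by abel
  rw [this, h4]; abel

end Stmt13
namespace Stmt13

variable {n : ℕ}

/-- projection onto the span of two vectors: explicit coefficients via Gram–Schmidt. -/
lemma proj2 (r u v : V n) :
    ∃ a c : ℝ, ((r - a • u - c • v) ⬝ᵥ u = 0) ∧ ((r - a • u - c • v) ⬝ᵥ v = 0) := by
  classical
  set cu : V n → ℝ := fun x => if u ⬝ᵥ u = 0 then 0 else (x ⬝ᵥ u) / (u ⬝ᵥ u) with hcu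
  set v' : V n := v - cu v • u with hv'
  set cv : V n → ℝ := fun x => if v' ⬝ᵥ v' = 0 then 0 else (x ⬝ᵥ v') / (v' ⬝ᵥ v') with hcv
  have hxu : ∀ x : V n, (x - cu x • u) ⬝ᵥ u = 0 := by
    intro x
    by_cases h : u ⬝ᵥ u = 0
    · have : u = 0 := eq_zero_of_dot_self h
      simp [this]
    · simp only [hcu, if_neg h, sub_dotProduct, smul_dotProduct, smul_eq_mul]
      field_simp
      simp
  have hv'u : v' ⬝ᵥ u = 0 := hxu v
  have hxv' : ∀ x : V n, (x - cv x • v') ⬝ᵥ v' = 0 := by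
    intro x
    by_cases h : v' ⬝ᵥ v' = 0
    · have : v' = 0 := eq_zero_of_dot_self h
      simp [this]
    · simp only [hcv, if_neg h, sub_dotProduct, smul_dotProduct, smul_eq_mul]
      field_simp
      simp
  set z : V n := r - cu r • u with hz
  set z2 : V n := z - cv z • v' with hz2
  have hz2u : z2 ⬝ᵥ u = 0 := by
    rw [hz2, sub_dotProduct, hxu r, smul_dotProduct, hv'u]
    simp
  have hz2v' : z2 ⬝ᵥ v' = 0 := hxv' z
  have hz2v : z2 ⬝ᵥ v = 0 := by
    have hvv : v = v' + cu v • u := by rw [hv']; abel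
    rw [hvv, dotProduct_add, hz2v', dotProduct_smul, hz2u]
    simp
  refine ⟨cu r - cv z * cu v, cv z, ?_, ?_⟩
  · have key : r - (cu r - cv z * cu v) • u - cv z • v = z2 := by
      rw [hz2, hz, hv']; module
    rw [key]; exact hz2u
  · have key : r - (cu r - cv z * cu v) • u - cv z • v = z2 := by
      rw [hz2, hz, hv']; module
    rw [key]; exact hz2v

/-- exchange lemma: if `W = U ⊔ ℝ∙u`, `v ∈ W`, `v ∉ U`, then `W = U ⊔ ℝ∙v`. -/
lemma exchange {U W : Submodule ℝ (V n)} {u v : V n} (hW : W = U ⊔ ℝ ∙ u)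
    (hv : v ∈ W) (hvU : v ∉ U) : W = U ⊔ ℝ ∙ v := by
  have hvmem : v ∈ U ⊔ ℝ ∙ u := hW ▸ hv
  rw [Submodule.mem_sup] at hvmem
  obtain ⟨p, hp, q, hq, hpq⟩ := hvmem
  rw [Submodule.mem_span_singleton] at hq
  obtain ⟨t, ht⟩ := hq
  have htne : t ≠ 0 := by
    rintro rfl
    apply hvU
    rw [← hpq, ← ht]; simpa using hp
  have hu : u = t⁻¹ • (v - p) := by
    rw [← hpq, ← ht, smul_sub]
    rw [show t⁻¹ • (p + t • u) = t⁻¹ • p + (t⁻¹ * t) • u by rw [smul_add, smul_smul]]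
    rw [inv_mul_cancel₀ htne, one_smul]
    abel
  apply le_antisymm
  · rw [hW]
    apply sup_le
    · exact le_sup_left
    · rw [Submodule.span_singleton_le_iff_mem, hu]
      apply Submodule.smul_mem
      apply Submodule.sub_mem
      · exact Submodule.mem_sup_right (Submodule.mem_span_singleton_self v)
      · exact Submodule.mem_sup_left hp
  · apply sup_le
    · rw [hW]; exact le_sup_left
    · rw [Submodule.span_singleton_le_iff_mem]; exact hv

end Stmt13
namespace Stmt13

variable {n : ℕ} (A : Matrix (Fin n) (Fin n) ℝ) (r0 : V n)

lemma krylov_mono {j k : ℕ} (h : j ≤ k) : krylov A r0 j ≤ krylov A r0 k := by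
  apply Submodule.span_mono
  rintro v ⟨i, hi, rfl⟩
  exact ⟨i, lt_of_lt_of_le hi h, rfl⟩

lemma pow_mem_krylov {i k : ℕ} (h : i < k) : (A ^ i).mulVec r0 ∈ krylov A r0 k :=
  Submodule.subset_span ⟨i, h, rfl⟩

lemma krylov_zero : krylov A r0 0 = ⊥ := by
  rw [krylov]
  convert Submodule.span_empty
  ext v; simp

lemma krylov_succ (k : ℕ) :
    krylov A r0 (k + 1) = krylov A r0 k ⊔ ℝ ∙ ((A ^ k).mulVec r0) := by
  rw [krylov, krylov, ← Submodule.span_union]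
  congr 1
  ext v
  constructor
  · rintro ⟨i, hi, rfl⟩
    rcases Nat.lt_succ_iff_lt_or_eq.mp hi with h | rfl
    · exact Or.inl ⟨i, h, rfl⟩
    · exact Or.inr rfl
  · rintro (⟨i, hi, rfl⟩ | h)
    · exact ⟨i, Nat.lt_succ_of_lt hi, rfl⟩
    · exact ⟨k, Nat.lt_succ_self k, h⟩

lemma krylov_one : krylov A r0 1 = ℝ ∙ r0 := by
  rw [krylov_succ, krylov_zero, bot_sup_eq, pow_zero, Matrix.one_mulVec]

lemma mulVec_mem_krylov {w : V n} {k : ℕ} (hw : w ∈ krylov A r0 k) :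
    A.mulVec w ∈ krylov A r0 (k + 1) := by
  induction hw using Submodule.span_induction with
  | mem u hu =>
    obtain ⟨i, hi, rfl⟩ := hu
    rw [Matrix.mulVec_mulVec, ← pow_succ']
    exact pow_mem_krylov A r0 (Nat.succ_lt_succ hi)
  | zero => rw [Matrix.mulVec_zero]; exact Submodule.zero_mem _
  | add u w _ _ h1 h2 => rw [Matrix.mulVec_add]; exact Submodule.add_mem _ h1 h2
  | smul t u _ h1 => rw [Matrix.mulVec_smul]; exact Submodule.smul_mem _ t h1

lemma r0_mem_krylov : r0 ∈ krylov A r0 1 := by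
  rw [krylov_one]; exact Submodule.mem_span_singleton_self r0

end Stmt13
namespace Stmt13

variable {n : ℕ}

/-- GMRES residuals. -/
def rG (A : Matrix (Fin n) (Fin n) ℝ) (b : V n) (xG : ℕ → V n) (j : ℕ) : V n :=
  residv A b (xG j)

/-- Krylov spaces of the GMRES process. -/
def KG (A : Matrix (Fin n) (Fin n) ℝ) (b x0 : V n) (k : ℕ) : Submodule ℝ (V n) :=
  krylov A (residv A b x0) k

section GMRESFacts

variable {A : Matrix (Fin n) (Fin n) ℝ} {b x0 : V n} {xG : ℕ → V n}
  (hG : IsGMRES A b x0 xG)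

include hG

lemma xG_zero : xG 0 = x0 := hG.1

lemma xG_mem (j : ℕ) : xG j - x0 ∈ KG A b x0 j := (hG.2 j).1

lemma xG_min (j : ℕ) : ∀ z : V n, z - x0 ∈ KG A b x0 j →
    norm2 (rG A b xG j) ≤ norm2 (residv A b z) := fun z hz => (hG.2 j).2 z hz

lemma rG_orth (j : ℕ) : ∀ w ∈ KG A b x0 j, rG A b xG j ⬝ᵥ A.mulVec w = 0 :=
  min_imp_orth (xG_mem hG j) (xG_min hG j)

lemma rG_mem (j : ℕ) : rG A b xG j ∈ KG A b x0 (j + 1) := by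
  have h : rG A b xG j = residv A b x0 + A.mulVec (xG j - x0) := by
    rw [rG, show xG j = x0 + (xG j - x0) by abel, residv_add]
    rw [show x0 + (xG j - x0) = xG j by abel]
  rw [h]
  exact Submodule.add_mem _ (krylov_mono A _ (Nat.one_le_iff_ne_zero.mpr (Nat.succ_ne_zero j))
    (r0_mem_krylov A _)) (mulVec_mem_krylov A _ (xG_mem hG j))

/-- Gram structure: `⟨r_i, r_l⟩ = ⟨r_i, r_i⟩` for `l ≤ i`. -/
lemma rG_gram {i l : ℕ} (h : l ≤ i) :
    rG A b xG i ⬝ᵥ rG A b xG l = rG A b xG i ⬝ᵥ rG A b xG i := by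
  have hd : rG A b xG i - rG A b xG l = A.mulVec (xG i - xG l) := residv_sub A b _ _
  have hmem : xG i - xG l ∈ KG A b x0 i := by
    have : xG i - xG l = (xG i - x0) - (xG l - x0) := by abel
    rw [this]
    exact Submodule.sub_mem _ (xG_mem hG i) (krylov_mono A _ h (xG_mem hG l))
  have horth := rG_orth hG i _ hmem
  rw [← hd, dotProduct_sub] at horth
  linarith

end GMRESFacts

end Stmt13
namespace Stmt13

variable {n : ℕ} {A : Matrix (Fin n) (Fin n) ℝ} {b x0 : V n} {xG : ℕ → V n} {k0 : ℕ}

section Decrease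

variable (hG : IsGMRES A b x0 xG) (hk0 : 0 < k0)
  (hrk0 : residv A b (xG (k0 - 1)) ≠ 0)
  (hdec : ∀ k, 0 < k → k < k0 →
    norm2 (residv A b (xG k)) < norm2 (residv A b (xG (k - 1))))

include hdec in
lemma rG_norm_mono : ∀ l m', l ≤ m' → m' < k0 →
    norm2 (rG A b xG m') ≤ norm2 (rG A b xG l) := by
  intro l m' hlm hm'
  induction m', hlm using Nat.le_induction with
  | base => exact le_refl _
  | succ m' hlm ih =>
    have h1 := hdec (m' + 1) (Nat.succ_pos m') hm'
    simp only [Nat.add_sub_cancel] at h1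
    exact le_trans (le_of_lt h1) (ih (lt_trans (Nat.lt_succ_self m') hm'))

include hrk0 hdec in
lemma rG_ne_zero : ∀ j < k0, rG A b xG j ≠ 0 := by
  intro j hj hzero
  have h1 := rG_norm_mono hdec j (k0 - 1) (Nat.le_sub_one_of_lt hj)
    (Nat.sub_lt (Nat.pos_of_ne_zero (by omega)) one_pos)
  rw [hzero] at h1
  have h2 : norm2 (rG A b xG (k0 - 1)) ≤ 0 := by simpa [norm2] using h1
  have h3 : (0:ℝ) < norm2 (rG A b xG (k0 - 1)) := by
    rw [norm2]
    exact Real.sqrt_pos.mpr (dot_self_pos hrk0)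
  linarith

end Decrease

/-- the set of the first `j` GMRES residuals. -/
def RSet (A : Matrix (Fin n) (Fin n) ℝ) (b : V n) (xG : ℕ → V n) (j : ℕ) : Set (V n) :=
  {v | ∃ l < j, v = rG A b xG l}

lemma RSet_zero : RSet A b xG 0 = ∅ := by
  ext v; simp [RSet]

lemma RSet_succ (j : ℕ) : RSet A b xG (j + 1) = RSet A b xG j ∪ {rG A b xG j} := by
  ext v
  constructor
  · rintro ⟨l, hl, rfl⟩
    rcases Nat.lt_succ_iff_lt_or_eq.mp hl with h | rfl
    · exact Or.inl ⟨l, h, rfl⟩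
    · exact Or.inr rfl
  · rintro (⟨l, hl, rfl⟩ | h)
    · exact ⟨l, Nat.lt_succ_of_lt hl, rfl⟩
    · exact ⟨j, Nat.lt_succ_self j, h⟩

lemma RSet_eq_range (j : ℕ) :
    RSet A b xG j = Set.range (fun l : Fin j => rG A b xG l) := by
  ext v
  constructor
  · rintro ⟨l, hl, rfl⟩; exact ⟨⟨l, hl⟩, rfl⟩
  · rintro ⟨⟨l, hl⟩, rfl⟩; exact ⟨l, hl, rfl⟩

end Stmt13
namespace Stmt13

variable {n : ℕ} {A : Matrix (Fin n) (Fin n) ℝ} {b x0 : V n} {xG : ℕ → V n} {k0 : ℕ}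

@[simp] lemma rG_def (j : ℕ) : rG A b xG j = residv A b (xG j) := rfl

section KeyQ

variable (hG : IsGMRES A b x0 xG) (hk0 : 0 < k0)
  (hrk0 : residv A b (xG (k0 - 1)) ≠ 0)
  (hdec : ∀ k, 0 < k → k < k0 →
    norm2 (residv A b (xG k)) < norm2 (residv A b (xG (k - 1))))

include hG hrk0 hdec in
/-- Key structure lemma: the Krylov spaces are spanned by the residuals, the new residual
is outside the previous Krylov space, and extends it to the next one. -/
lemma keyQ : ∀ j : ℕ,
    (j ≤ k0 → KG A b x0 j = Submodule.span ℝ (RSet A b xG j)) ∧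
    (j < k0 → rG A b xG j ∉ KG A b x0 j ∧
      KG A b x0 (j + 1) = KG A b x0 j ⊔ ℝ ∙ rG A b xG j) := by
  intro j
  induction j using Nat.strong_induction_on with
  | _ j IH =>
  have kspan : j ≤ k0 → KG A b x0 j = Submodule.span ℝ (RSet A b xG j) := by
    intro hj
    match j with
    | 0 => rw [KG, krylov_zero, RSet_zero, Submodule.span_empty]
    | (i+1) =>
      have hik0 : i < k0 := lt_of_lt_of_le (Nat.lt_succ_self i) hj
      have hQ := (IH i (Nat.lt_succ_self i)).2 hik0
      have hKsp := (IH i (Nat.lt_succ_self i)).1 (le_of_lt hik0)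
      rw [show KG A b x0 (i+1) = KG A b x0 i ⊔ ℝ ∙ rG A b xG i from hQ.2, hKsp,
        RSet_succ, Submodule.span_union, Set.singleton_def]
  refine ⟨kspan, fun hj => ?_⟩
  have hnotmem : rG A b xG j ∉ KG A b x0 j := by
    intro hmem
    match j, hj with
    | 0, hj =>
      rw [KG, krylov_zero, Submodule.mem_bot] at hmem
      exact rG_ne_zero hrk0 hdec 0 hj hmem
    | (i+1), hj =>
      set j := i + 1 with hjdef
      have hj1 : 0 < j := Nat.succ_pos i
      set r : ℕ → V n := rG A b xG with hr
      set E : Set (V n) := {v | ∃ l, l + 1 < j ∧ v = r l - r (l + 1)} with hE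
      -- covering of residuals by E and the last residual
      have hcov : ∀ t l, l + t + 1 = j →
          r l ∈ Submodule.span ℝ E ⊔ ℝ ∙ r (j - 1) := by
        intro t
        induction t with
        | zero =>
          intro l hl
          have : l = j - 1 := by omega
          rw [this]
          exact Submodule.mem_sup_right (Submodule.mem_span_singleton_self _)
        | succ t iht =>
          intro l hl
          have h1 : r l = (r l - r (l + 1)) + r (l + 1) := by abel
          rw [h1]
          refine Submodule.add_mem _ ?_ (iht (l + 1) (by omega))
          exact Submodule.mem_sup_left (Submodule.subset_span ⟨l, by omega, rfl⟩)
      have hKle : KG A b x0 j ≤ Submodule.span ℝ E ⊔ ℝ ∙ r (j - 1) := by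
        rw [kspan (le_of_lt hj)]
        apply Submodule.span_le.mpr
        rintro v ⟨l, hl, rfl⟩
        exact hcov (j - 1 - l) l (by omega)
      obtain ⟨w, hw, q, hq, hwq⟩ := Submodule.mem_sup.mp (hKle hmem)
      obtain ⟨c, hc⟩ := Submodule.mem_span_singleton.mp hq
      -- orthogonality of r j and r (j-1) to the generators of E
      have horthj : ∀ u ∈ E, r j ⬝ᵥ u = 0 := by
        rintro u ⟨l, hl, rfl⟩
        rw [dotProduct_sub, rG_gram hG (by omega : l ≤ j),
          rG_gram hG (by omega : l + 1 ≤ j), sub_self]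
      have horthj1 : ∀ u ∈ E, r (j - 1) ⬝ᵥ u = 0 := by
        rintro u ⟨l, hl, rfl⟩
        rw [dotProduct_sub, rG_gram hG (by omega : l ≤ j - 1),
          rG_gram hG (by omega : l + 1 ≤ j - 1), sub_self]
      have hσpos : 0 < r j ⬝ᵥ r j := dot_self_pos (rG_ne_zero hrk0 hdec j hj)
      -- the coefficient c equals 1
      have hc1 : c = 1 := by
        have h1 : r j ⬝ᵥ r j = r j ⬝ᵥ w + c * (r j ⬝ᵥ r (j - 1)) := by
          nth_rewrite 2 [show r j = w + c • r (j - 1) by rw [← hwq, ← hc]]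
          rw [dotProduct_add, dotProduct_smul, smul_eq_mul]
        rw [dot_zero_of_span horthj w hw, zero_add,
          rG_gram hG (by omega : j - 1 ≤ j)] at h1
        have : (r j ⬝ᵥ r j) * (1 - c) = 0 := by linarith
        rcases mul_eq_zero.mp this with h | h
        · exact absurd h (ne_of_gt hσpos)
        · linarith
      -- hence r j - r (j-1) lies in span E and is orthogonal to span E
      have hveq : r j - r (j - 1) = w := by
        rw [← hwq, ← hc, hc1, one_smul]; abel
      have hvorth : ∀ u ∈ Submodule.span ℝ E, (r j - r (j - 1)) ⬝ᵥ u = 0 := by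
        apply dot_zero_of_span
        intro u hu
        rw [sub_dotProduct, horthj u hu, horthj1 u hu, sub_self]
      have hv0 : r j - r (j - 1) = 0 := by
        apply eq_zero_of_dot_self
        exact hvorth _ (by rw [hveq]; exact hw)
      have hrr : r j = r (j - 1) := by
        have : r j = (r j - r (j - 1)) + r (j - 1) := by abel
        rw [this, hv0, zero_add]
      have hlt := dot_lt_dot_of_norm2 (hdec j hj1 hj)
      rw [show residv A b (xG j) = r j from rfl,
        show residv A b (xG (j-1)) = r (j-1) from rfl, hrr] at hlt
      exact lt_irrefl _ hlt
  refine ⟨hnotmem, ?_⟩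
  exact exchange (krylov_succ A _ j) (rG_mem hG j) hnotmem

end KeyQ

end Stmt13
namespace Stmt13

variable {n : ℕ} {A : Matrix (Fin n) (Fin n) ℝ} {b x0 : V n} {xG : ℕ → V n} {k0 : ℕ}

lemma dotA_zero_of_span {A : Matrix (Fin n) (Fin n) ℝ} {z : V n} {s : Set (V n)}
    (hg : ∀ u ∈ s, z ⬝ᵥ A.mulVec u = 0) :
    ∀ u ∈ Submodule.span ℝ s, z ⬝ᵥ A.mulVec u = 0 := by
  intro x h
  induction h using Submodule.span_induction with
  | mem u hu => exact hg u hu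
  | zero => simp
  | add u w _ _ h1 h2 => rw [Matrix.mulVec_add, dotProduct_add, h1, h2, add_zero]
  | smul t u _ h1 => rw [Matrix.mulVec_smul, dotProduct_smul, h1, smul_zero]

lemma sym_struct (hsym : A.IsSymm ∨ ∃ (α : ℝ) (S : Matrix (Fin n) (Fin n) ℝ),
    Sᵀ = -S ∧ A = α • 1 + S) : ∃ c₁ c₂ : ℝ, Aᵀ = c₁ • 1 + c₂ • A := by
  rcases hsym with h | ⟨α, S, hS, rfl⟩
  · exact ⟨0, 1, by rw [h.eq]; simp⟩
  · refine ⟨2 * α, -1, ?_⟩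
    rw [Matrix.transpose_add, Matrix.transpose_smul, Matrix.transpose_one, hS]
    rw [smul_add]
    module

lemma shift_mulVec {A : Matrix (Fin n) (Fin n) ℝ} (c₁ c₂ : ℝ) (y : V n) :
    ((c₁ • (1 : Matrix (Fin n) (Fin n) ℝ) + c₂ • A)).mulVec y = c₁ • y + c₂ • A.mulVec y := by
  rw [Matrix.add_mulVec, Matrix.smul_mulVec, Matrix.smul_mulVec, Matrix.one_mulVec]

section NG

variable (hA : IsUnit A.det)
  (hsym : A.IsSymm ∨ ∃ (α : ℝ) (S : Matrix (Fin n) (Fin n) ℝ), Sᵀ = -S ∧ A = α • 1 + S)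
  (hG : IsGMRES A b x0 xG) (hk0 : 0 < k0)
  (hrk0 : residv A b (xG (k0 - 1)) ≠ 0)
  (hdec : ∀ k, 0 < k → k < k0 →
    norm2 (residv A b (xG k)) < norm2 (residv A b (xG (k - 1))))

include hA hsym hG hrk0 hdec in
lemma ngmres_eq_gmres {x : ℕ → V n} {βx : ℕ → ℕ → ℝ} {m : ℕ} (hm : 1 ≤ m)
    (hx : IsNGMRES A b x0 (fun k => min k m) x βx) :
    ∀ j ≤ k0, x j = xG j := by
  intro j
  induction j using Nat.strong_induction_on with
  | _ j IH =>
  intro hj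
  match j, hj with
  | 0, hj => rw [hx.1, hG.1]
  | (k+1), hj =>
    have hIH : ∀ i ≤ k, x i = xG i := fun i hik =>
      IH i (Nat.lt_succ_of_le hik) (le_trans (le_trans hik (Nat.le_succ k)) hj)
    have hkk0 : k < k0 := lt_of_lt_of_le (Nat.lt_succ_self k) hj
    set mk := min k m with hmk
    have hmkk : mk ≤ k := min_le_left k m
    set rk : V n := rG A b xG k with hrk
    -- membership of every NGMRES update in the affine Krylov space
    have hgenmem : ∀ i ≤ k, qmap A b (x k) - x (k - i) ∈ KG A b x0 (k+1) := by
      intro i hik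
      rw [hIH k le_rfl, hIH (k - i) (Nat.sub_le k i), qmap_eq]
      have h1 : xG k - residv A b (xG k) - xG (k - i)
          = ((xG k - x0) - (xG (k-i) - x0)) - rG A b xG k := by rw [rG_def]; abel
      rw [h1]
      refine Submodule.sub_mem _ (Submodule.sub_mem _ ?_ ?_) (rG_mem hG k)
      · exact krylov_mono A _ (Nat.le_succ k) (xG_mem hG k)
      · exact krylov_mono A _ (le_trans (Nat.sub_le k i) (Nat.le_succ k)) (xG_mem hG (k-i))
    have hupdmem : ∀ β' : ℕ → ℝ, ngmresUpdate A b x β' k mk - x0 ∈ KG A b x0 (k+1) := by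
      intro β'
      rw [ngmresUpdate]
      have h1 : qmap A b (x k) + (∑ i ∈ Finset.range (mk + 1), β' i • (qmap A b (x k) - x (k - i))) - x0
          = (qmap A b (x k) - x0) + ∑ i ∈ Finset.range (mk + 1), β' i • (qmap A b (x k) - x (k - i)) := by
        abel
      rw [h1]
      refine Submodule.add_mem _ ?_ (Submodule.sum_mem _ fun i hi => Submodule.smul_mem _ _
        (hgenmem i (by simp only [Finset.mem_range] at hi; omega)))
      · rw [hIH k le_rfl, qmap_eq]
        have h2 : xG k - residv A b (xG k) - x0 = (xG k - x0) - rG A b xG k := by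
          rw [rG_def]; abel
        rw [h2]
        exact Submodule.sub_mem _ (krylov_mono A _ (Nat.le_succ k) (xG_mem hG k)) (rG_mem hG k)
    have hx1 := (hx.2 k).1
    have hx2 := (hx.2 k).2
    simp only [hmk] at hx1 hx2
    -- it now suffices to find one update point that is GMRES-optimal on K (k+1)
    suffices hminfull : ∀ z : V n, z - x0 ∈ KG A b x0 (k+1) →
        norm2 (residv A b (x (k+1))) ≤ norm2 (residv A b z) by
      refine min_unique hA ?_ (xG_mem hG (k+1)) hminfull (xG_min hG (k+1))
      rw [hx1]; exact hupdmem _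
    rcases Nat.eq_zero_or_pos k with rfl | hkpos
    · -- base step k = 0 : the reachable set is exactly x0 + K 1
      intro z hz
      rw [KG, krylov_one] at hz
      obtain ⟨t, ht⟩ := Submodule.mem_span_singleton.mp hz
      have hmk0 : mk = 0 := by omega
      set β' : ℕ → ℝ := fun _ => -(1 + t) with hβ'
      have hupd : ngmresUpdate A b x β' 0 mk = z := by
        rw [hmk0, ngmresUpdate, Finset.sum_range_one, hx.1, qmap_eq]
        have hz' : z = x0 + t • residv A b x0 := by rw [ht]; abel
        rw [hz', hβ']
        simp only
        module
      calc norm2 (residv A b (x 1)) ≤ norm2 (residv A b (ngmresUpdate A b x β' 0 mk)) := hx2 β'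
        _ = norm2 (residv A b z) := by rw [hupd]
    · -- main step, k ≥ 1
      have hk1k0 : k - 1 < k0 := by omega
      set dk : V n := xG k - xG (k-1) with hdk
      set u : V n := A.mulVec rk with hu
      set v : V n := A.mulVec dk with hv
      obtain ⟨a, c, horthu, horthv⟩ := proj2 rk u v
      set z' : V n := rk - a • u - c • v with hz'
      set x' : V n := xG k - a • rk - c • dk with hx'
      have hresx' : residv A b x' = z' := by
        have h1 : x' = xG k + (-(a • rk) - c • dk) := by rw [hx']; abel
        rw [h1, residv_add]
        rw [show A.mulVec (-(a • rk) - c • dk) = -(a • u) - c • v by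
          rw [Matrix.mulVec_sub, Matrix.mulVec_neg, Matrix.mulVec_smul, Matrix.mulVec_smul, hu, hv]]
        rw [hz', ← rG_def (xG := xG)]
        abel
      -- A dk = rk - r (k-1)
      have hAdk : v = rk - rG A b xG (k-1) := by
        rw [hv, hdk, ← residv_sub A b, hrk]; rfl
      -- d_k ∉ K (k-1)
      have hdknot : dk ∉ KG A b x0 (k-1) := by
        intro hmem
        have hxGkmem : xG k - x0 ∈ KG A b x0 (k-1) := by
          have h1 : xG k - x0 = dk + (xG (k-1) - x0) := by rw [hdk]; abel
          rw [h1]; exact Submodule.add_mem _ hmem (xG_mem hG (k-1))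
        have heq : xG k = xG (k-1) := by
          refine min_unique hA hxGkmem (xG_mem hG (k-1)) ?_ (xG_min hG (k-1))
          intro z hzmem
          exact xG_min hG k z (krylov_mono A _ (Nat.sub_le k 1) hzmem)
        have hlt := hdec k hkpos hkk0
        rw [heq] at hlt
        exact lt_irrefl _ hlt
      -- Krylov space decompositions
      have hQk := ((keyQ hG hrk0 hdec) k).2 hkk0
      have hQk1 := ((keyQ hG hrk0 hdec) (k-1)).2 hk1k0
      have hKk1span := ((keyQ hG hrk0 hdec) (k-1)).1 (le_of_lt hk1k0)
      have hKkdec : KG A b x0 k = KG A b x0 (k-1) ⊔ ℝ ∙ dk := by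
        have h1 : KG A b x0 ((k-1)+1) = KG A b x0 (k-1) ⊔ ℝ ∙ rG A b xG (k-1) := hQk1.2
        rw [show (k-1)+1 = k by omega] at h1
        refine exchange h1 ?_ hdknot
        have : dk = (xG k - x0) - (xG (k-1) - x0) := by rw [hdk]; abel
        rw [this]
        exact Submodule.sub_mem _ (xG_mem hG k) (krylov_mono A _ (Nat.sub_le k 1) (xG_mem hG (k-1)))
      -- K (k+1) is contained in span of RSet (k-1) ∪ {dk, rk}
      have hKle : KG A b x0 (k+1) ≤
          Submodule.span ℝ (RSet A b xG (k-1) ∪ {dk, rk}) := by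
        rw [hQk.2, hKkdec, hKk1span, ← hrk]
        rw [Submodule.span_union (RSet A b xG (k-1)) {dk, rk}]
        apply sup_le
        · apply sup_le
          · exact le_sup_left
          · rw [Submodule.span_singleton_le_iff_mem]
            exact Submodule.mem_sup_right (Submodule.subset_span (by simp))
        · rw [Submodule.span_singleton_le_iff_mem]
          exact Submodule.mem_sup_right (Submodule.subset_span (by simp))
      -- symmetry structure
      obtain ⟨c₁, c₂, hAt⟩ := sym_struct hsym
      -- the residual z' of x' is orthogonal to A K(k+1)
      have horth : ∀ w ∈ KG A b x0 (k+1), z' ⬝ᵥ A.mulVec w = 0 := by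
        intro w hw
        refine dotA_zero_of_span ?_ w (hKle hw)
        rintro g (⟨l, hl, rfl⟩ | hg)
        · -- g = r l with l < k - 1
          have hrlKk1 : rG A b xG l ∈ KG A b x0 (k-1) :=
            krylov_mono A _ (by omega) (rG_mem hG l)
          have hrlKk : rG A b xG l ∈ KG A b x0 k :=
            krylov_mono A _ (Nat.sub_le k 1) hrlKk1
          have hArlKk : A.mulVec (rG A b xG l) ∈ KG A b x0 k := by
            have := mulVec_mem_krylov A _ hrlKk1
            rw [show (k-1)+1 = k by omega] at this
            exact this
          -- ⟨A rk, A r l⟩ = 0 via symmetry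
          have hterm2 : u ⬝ᵥ A.mulVec (rG A b xG l) = 0 := by
            rw [hu, hrk, dotProduct_comm, dot_mulVec, hAt, shift_mulVec]
            rw [dotProduct_comm, dotProduct_add, dotProduct_smul,
              dotProduct_smul]
            rw [rG_orth hG k _ hrlKk, rG_orth hG k _ hArlKk]
            simp
          have hterm3 : v ⬝ᵥ A.mulVec (rG A b xG l) = 0 := by
            rw [hAdk, sub_dotProduct, hrk, rG_orth hG k _ hrlKk,
              rG_orth hG (k-1) _ hrlKk1]
            simp
          rw [hz', hrk, sub_dotProduct, sub_dotProduct,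
            smul_dotProduct, smul_dotProduct, hterm2, hterm3,
            rG_orth hG k _ hrlKk]
          simp
        · rcases hg with rfl | hg
          · exact horthv
          · rw [Set.mem_singleton_iff] at hg
            rw [hg]
            exact horthu
      -- x' is optimal over x0 + K(k+1)
      have hx'mem : x' - x0 ∈ KG A b x0 (k+1) := by
        have h1 : x' - x0 = (xG k - x0) - a • rk - c • dk := by rw [hx']; abel
        rw [h1]
        refine Submodule.sub_mem _ (Submodule.sub_mem _ ?_ ?_) ?_
        · exact krylov_mono A _ (Nat.le_succ k) (xG_mem hG k)
        · exact Submodule.smul_mem _ _ (rG_mem hG k)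
        · refine Submodule.smul_mem _ _ ?_
          have : dk = (xG k - x0) - (xG (k-1) - x0) := by rw [hdk]; abel
          rw [this]
          exact krylov_mono A _ (Nat.le_succ k) (Submodule.sub_mem _ (xG_mem hG k)
            (krylov_mono A _ (Nat.sub_le k 1) (xG_mem hG (k-1))))
      have hx'min : ∀ z : V n, z - x0 ∈ KG A b x0 (k+1) →
          norm2 (residv A b x') ≤ norm2 (residv A b z) := by
        apply orth_imp_min hx'mem
        intro w hw
        rw [hresx']
        exact horth w hw
      -- x' is reachable as an NGMRES update
      have hmk1 : 1 ≤ mk := le_min hkpos hm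
      set β' : ℕ → ℝ := fun i => if i = 0 then a + c - 1 else if i = 1 then -c else 0 with hβ'
      have hreach : ngmresUpdate A b x β' k mk = x' := by
        rw [ngmresUpdate]
        have hsum : ∑ i ∈ Finset.range (mk + 1), β' i • (qmap A b (x k) - x (k - i))
            = β' 0 • (qmap A b (x k) - x k) + β' 1 • (qmap A b (x k) - x (k-1)) := by
          rw [← Finset.sum_subset (s₁ := ({0, 1} : Finset ℕ))
            (by intro i hi; simp only [Finset.mem_insert, Finset.mem_singleton] at hi
                rcases hi with rfl | rfl <;> simp [Finset.mem_range] <;> omega)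
            (by intro i _ hi
                simp only [Finset.mem_insert, Finset.mem_singleton] at hi
                push_neg at hi
                have : β' i = 0 := by rw [hβ']; simp [hi.1, hi.2]
                rw [this, zero_smul])]
          rw [Finset.sum_insert (by simp), Finset.sum_singleton]
          norm_num
        rw [hsum, hIH k le_rfl, hIH (k-1) (Nat.sub_le k 1), qmap_eq]
        have hb0 : β' 0 = a + c - 1 := by simp [hβ']
        have hb1 : β' 1 = -c := by simp [hβ']
        rw [hb0, hb1, hx', hdk, hrk]
        simp only [rG_def]
        module
      -- conclude
      intro z hz
      calc norm2 (residv A b (x (k+1)))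
          ≤ norm2 (residv A b (ngmresUpdate A b x β' k mk)) := hx2 β'
        _ = norm2 (residv A b x') := by rw [hreach]
        _ ≤ norm2 (residv A b z) := hx'min z hz

end NG

end Stmt13
namespace Stmt13

variable {n : ℕ} {A : Matrix (Fin n) (Fin n) ℝ} {b x0 : V n} {xG : ℕ → V n} {k0 : ℕ}

lemma mulVec_sum' (M : Matrix (Fin n) (Fin n) ℝ) (s : Finset ℕ) (f : ℕ → V n) :
    M.mulVec (∑ i ∈ s, f i) = ∑ i ∈ s, M.mulVec (f i) := by
  classical
  induction s using Finset.induction_on with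
  | empty => simp
  | insert a s h ih => rw [Finset.sum_insert h, Finset.sum_insert h, Matrix.mulVec_add, ih]

section AA

variable (hA : IsUnit A.det) (hG : IsGMRES A b x0 xG) (hk0 : 0 < k0)
  (hrk0 : residv A b (xG (k0 - 1)) ≠ 0)
  (hdec : ∀ k, 0 < k → k < k0 →
    norm2 (residv A b (xG k)) < norm2 (residv A b (xG (k - 1))))

include hA hG hrk0 hdec in
lemma aa_eq_gmres {xA : ℕ → V n} {γ : ℕ → ℕ → ℝ}
    (hAA : IsAA A b x0 (fun k => k) xA γ) :
    ∀ j ≤ k0, xA (j + 1) = qmap A b (xG j) := by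
  intro j
  induction j using Nat.strong_induction_on with
  | _ j IH =>
  intro hj
  rcases Nat.eq_zero_or_pos j with rfl | hjpos
  · have h1 := (hAA.2 0).1
    simp only [aaUpdate, Finset.Icc_eq_empty_of_lt Nat.zero_lt_one, Finset.sum_empty,
      add_zero] at h1
    rw [h1, hAA.1, hG.1]
  · -- j ≥ 1
    have hxAi : ∀ i, 1 ≤ i → i ≤ j → xA i = qmap A b (xG (i - 1)) := by
      intro i h1 h2
      have := IH (i - 1) (by omega) (by omega)
      rwa [show i - 1 + 1 = i by omega] at this
    set Y : (ℕ → ℝ) → V n :=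
      fun g => xA j + ∑ i ∈ Finset.Icc 1 j, g i • (xA j - xA (j - i)) with hY
    -- update and objective are q and residv of the affine combination
    have lem1 : ∀ g, aaUpdate A b xA g j j = qmap A b (Y g) := by
      intro g
      rw [hY, aaUpdate]
      simp only
      rw [qmap_add, mulVec_sum']
      congr 1
      apply Finset.sum_congr rfl
      intro i _
      rw [Matrix.mulVec_smul, qmap_sub]
    have lem2 : ∀ g, aaObj A b xA g j j = residv A b (Y g) := by
      intro g
      rw [hY, aaObj]
      simp only
      rw [residv_add, mulVec_sum']
      congr 1
      apply Finset.sum_congr rfl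
      intro i _
      rw [Matrix.mulVec_smul, ← residv_sub]
    -- membership of the reachable set in x0 + K j
    have hxAmem : ∀ i ≤ j, xA i - x0 ∈ KG A b x0 j := by
      intro i hi
      rcases Nat.eq_zero_or_pos i with rfl | hipos
      · rw [hAA.1, sub_self]; exact Submodule.zero_mem _
      · rw [hxAi i hipos hi, qmap_eq]
        have h1 : xG (i-1) - residv A b (xG (i-1)) - x0
            = (xG (i-1) - x0) - rG A b xG (i-1) := by rw [rG_def]; abel
        rw [h1]
        refine Submodule.sub_mem _ ?_ ?_
        · exact krylov_mono A _ (by omega) (xG_mem hG (i-1))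
        · exact krylov_mono A _ (by omega) (rG_mem hG (i-1))
    have lem3a : ∀ g, Y g - x0 ∈ KG A b x0 j := by
      intro g
      rw [hY]
      simp only
      have h1 : xA j + (∑ i ∈ Finset.Icc 1 j, g i • (xA j - xA (j - i))) - x0
          = (xA j - x0) + ∑ i ∈ Finset.Icc 1 j, g i • (xA j - xA (j - i)) := by abel
      rw [h1]
      refine Submodule.add_mem _ (hxAmem j le_rfl) (Submodule.sum_mem _ fun i hi => ?_)
      refine Submodule.smul_mem _ _ ?_
      have h2 : xA j - xA (j - i) = (xA j - x0) - (xA (j - i) - x0) := by abel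
      rw [h2]
      exact Submodule.sub_mem _ (hxAmem j le_rfl) (hxAmem (j - i) (by omega))
    -- the span of the update directions contains K j
    set S : Submodule ℝ (V n) :=
      Submodule.span ℝ (Set.range fun i : Fin j => xA j - xA (j - (i.val + 1))) with hS
    have hS1 : ∀ l < j, xA j - xA l ∈ S := by
      intro l hl
      apply Submodule.subset_span
      refine ⟨⟨j - l - 1, by omega⟩, ?_⟩
      show xA j - xA (j - (j - l - 1 + 1)) = xA j - xA l
      rw [show j - (j - l - 1 + 1) = l by omega]
    have hstep : ∀ l < j, xA (l + 1) - xA l ∈ S := by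
      intro l hl
      have h1 : xA (l+1) - xA l = (xA j - xA l) - (xA j - xA (l+1)) := by abel
      rw [h1]
      refine Submodule.sub_mem _ (hS1 l hl) ?_
      rcases lt_or_eq_of_le (Nat.succ_le_of_lt hl) with h | h
      · exact hS1 (l+1) h
      · rw [show l + 1 = j from h, sub_self]; exact Submodule.zero_mem _
    have hres : ∀ l < j, rG A b xG l ∈ S := by
      intro l
      induction l using Nat.strong_induction_on with
      | _ l IHl =>
      intro hl
      rcases Nat.eq_zero_or_pos l with rfl | hlpos
      · have h1 : xA 1 - xA 0 = -(rG A b xG 0) := by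
          rw [hxAi 1 le_rfl (by omega), hAA.1, qmap_eq, rG_def, hG.1]
          abel
        have := hstep 0 (by omega)
        rw [h1] at this
        simpa using S.neg_mem this
      · -- l ≥ 1
        have hKlS : KG A b x0 l ≤ S := by
          rw [(keyQ hG hrk0 hdec l).1 (by omega)]
          apply Submodule.span_le.mpr
          rintro v ⟨i, hi, rfl⟩
          exact IHl i (by omega) (by omega)
        have hdl : xG l - xG (l - 1) ∈ S := by
          apply hKlS
          have h1 : xG l - xG (l-1) = (xG l - x0) - (xG (l-1) - x0) := by abel
          rw [h1]
          exact Submodule.sub_mem _ (xG_mem hG l) (krylov_mono A _ (by omega) (xG_mem hG (l-1)))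
        have hAd : xA (l+1) - xA l
            = (xG l - xG (l-1)) - (rG A b xG l - rG A b xG (l-1)) := by
          rw [hxAi (l+1) (by omega) (by omega), hxAi l (by omega) (by omega),
            show l + 1 - 1 = l from rfl]
          rw [qmap_eq, qmap_eq]
          simp only [rG_def]
          abel
        have h2 : rG A b xG l = rG A b xG (l-1) + (xG l - xG (l-1)) - (xA (l+1) - xA l) := by
          rw [hAd]; abel
        rw [h2]
        exact Submodule.sub_mem _ (Submodule.add_mem _ (IHl (l-1) (by omega) (by omega)) hdl)
          (hstep l hl)
    have hKS : KG A b x0 j ≤ S := by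
      rw [(keyQ hG hrk0 hdec j).1 hj]
      apply Submodule.span_le.mpr
      rintro v ⟨l, hl, rfl⟩
      exact hres l hl
    -- reachability: every point of x0 + K j is some Y g
    have lem3b : ∀ w ∈ KG A b x0 j, ∃ g : ℕ → ℝ, Y g = x0 + w := by
      intro w hw
      have hw' : x0 + w - xA j ∈ S := by
        have h1 : x0 + w - xA j = w - (xA j - xA 0) := by rw [hAA.1]; abel
        rw [h1]
        exact Submodule.sub_mem _ (hKS hw) (hS1 0 hjpos)
      rw [hS, Submodule.mem_span_range_iff_exists_fun] at hw'
      obtain ⟨cc, hcc⟩ := hw'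
      classical
      set ccN : ℕ → ℝ := fun l => if h : l < j then cc ⟨l, h⟩ else 0 with hccN
      refine ⟨fun i => ccN (i - 1), ?_⟩
      rw [hY]
      simp only
      have hsum : ∑ i ∈ Finset.Icc 1 j, ccN (i - 1) • (xA j - xA (j - i))
          = ∑ i : Fin j, cc i • (xA j - xA (j - (i.val + 1))) := by
        have hRHS : ∀ i : Fin j, cc i • (xA j - xA (j - (i.val + 1)))
            = ccN i.val • (xA j - xA (j - (i.val + 1))) := by
          intro i
          congr 1
          rw [hccN]
          simp only [i.isLt, dif_pos, Fin.eta]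
        rw [Finset.sum_congr rfl fun i _ => hRHS i]
        rw [Fin.sum_univ_eq_sum_range (fun l => ccN l • (xA j - xA (j - (l + 1))))]
        rw [← Finset.Ico_add_one_right_eq_Icc, Finset.sum_Ico_eq_sum_range]
        simp only [Nat.add_sub_cancel]
        apply Finset.sum_congr rfl
        intro l _
        rw [show 1 + l - 1 = l by omega, show j - (1 + l) = j - (l + 1) by omega]
      rw [hsum, hcc]
      abel
    -- conclude via uniqueness of the GMRES minimizer
    have hupd := (hAA.2 j).1
    have hmin := (hAA.2 j).2
    simp only at hupd hmin
    have Ymin : ∀ z : V n, z - x0 ∈ KG A b x0 j →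
        norm2 (residv A b (Y (γ j))) ≤ norm2 (residv A b z) := by
      intro z hz
      obtain ⟨g, hg⟩ := lem3b (z - x0) hz
      have hgz : Y g = z := by rw [hg]; abel
      have := hmin g
      rw [lem2, lem2, hgz] at this
      exact this
    have hYG : Y (γ j) = xG j :=
      min_unique hA (lem3a (γ j)) (xG_mem hG j) Ymin (xG_min hG j)
    rw [hupd, lem1, hYG]

end AA

end Stmt13
/-- for invertible symmetric or shifted skew-symmetric `A`, under strict
decrease of the GMRES residual norms up to `k0`, NGMRES(m) with any window `m ≥ 1`
reproduces the GMRES iterates up to `k0`, and full AA satisfies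
`x_{j+1}^A = q(x_j^{NG(m)}) = x_j^{NG(m)} - r_j^{NG(m)}`. -/
theorem stmt13 (n : ℕ) (A : Matrix (Fin n) (Fin n) ℝ) (b x0 xstar : Fin n → ℝ)
    (hA : IsUnit A.det)
    (hsym : A.IsSymm ∨ ∃ (α : ℝ) (S : Matrix (Fin n) (Fin n) ℝ), Sᵀ = -S ∧ A = α • 1 + S)
    (xNG : ℕ → ℕ → Fin n → ℝ) (β : ℕ → ℕ → ℕ → ℝ)
    (xA xG : ℕ → Fin n → ℝ) (γ : ℕ → ℕ → ℝ)
    (hNG : ∀ m, 1 ≤ m → IsNGMRES A b x0 (fun k => min k m) (xNG m) (β m))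
    (hAA : IsAA A b x0 (fun k => k) xA γ)
    (hG : IsGMRES A b x0 xG)
    (hstar : A.mulVec xstar = b) (hx0 : x0 ≠ xstar)
    (k0 : ℕ) (hk0 : 0 < k0)
    (hrk0 : residv A b (xG (k0 - 1)) ≠ 0)
    (hdec : ∀ k, 0 < k → k < k0 →
      norm2 (residv A b (xG k)) < norm2 (residv A b (xG (k - 1)))) :
    ∀ m, 1 ≤ m → ∀ j ≤ k0,
      xNG m j = xG j ∧
      xA (j + 1) = qmap A b (xNG m j) ∧
      qmap A b (xNG m j) = xNG m j - residv A b (xNG m j) := by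
  intro m hm j hj
  have hng := Stmt13.ngmres_eq_gmres hA hsym hG hrk0 hdec hm (hNG m hm)
  refine ⟨hng j hj, ?_, Stmt13.qmap_eq A b (xNG m j)⟩
  rw [hng j hj]
  exact Stmt13.aa_eq_gmres hA hG hrk0 hdec hAA j hj

end
end

section
/- For NGMRES with window size m = 0 applied to q(x) = (I − A)x + b, the update with the least-squares optimal coefficient β^{(k)} reduces to x_{k+1} = x_k − α_k r_k with α_k = (r_kᵀ A r_k)/(r_kᵀ Aᵀ A r_k), i.e., the optimal coefficient is β^{(k)} = (r_kᵀ A r_k)/(r_kᵀ Aᵀ A r_k) − 1; in particular NGMRES(0) coincides with the Minimal Residual (MR) iteration, and its first iterate x_1 = x_0 − (r_0ᵀ A r_0)/(r_0ᵀ Aᵀ A r_0) r_0 equals the first GMRES iterate. -/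
open Matrix Filter

noncomputable section

private lemma myDotSelfNonneg {n : ℕ} (u : Fin n → ℝ) : 0 ≤ u ⬝ᵥ u := by
  simpa using dotProduct_self_star_nonneg u

private lemma myNorm2Le {n : ℕ} (u v : Fin n → ℝ) (h : norm2 u ≤ norm2 v) :
    u ⬝ᵥ u ≤ v ⬝ᵥ v :=
  (Real.sqrt_le_sqrt_iff (myDotSelfNonneg v)).mp h

private lemma myQuadMin {c p s t : ℝ} (hs : 0 < s)
    (h : c - 2*t*p + t^2*s ≤ c - 2*(p/s)*p + (p/s)^2*s) : t = p / s := by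
  have e1 : p / s * s = p := div_mul_cancel₀ p (ne_of_gt hs)
  have key : (s*t - p)^2 ≤ 0 := by
    nlinarith [h, e1, mul_le_mul_of_nonneg_left h (le_of_lt hs)]
  have h0 : s*t - p = 0 := by nlinarith [sq_nonneg (s*t - p)]
  field_simp
  linarith

private lemma myAtA {n : ℕ} (A : Matrix (Fin n) (Fin n) ℝ) (r : Fin n → ℝ) :
    r ⬝ᵥ (Aᵀ * A).mulVec r = A.mulVec r ⬝ᵥ A.mulVec r := by
  rw [← Matrix.mulVec_mulVec, Matrix.dotProduct_mulVec, Matrix.vecMul_transpose]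

private lemma myExpand {n : ℕ} (u v : Fin n → ℝ) (t : ℝ) :
    (u - t • v) ⬝ᵥ (u - t • v) = u ⬝ᵥ u - 2*t*(u ⬝ᵥ v) + t^2*(v ⬝ᵥ v) := by
  simp only [sub_dotProduct, dotProduct_sub, smul_dotProduct,
    dotProduct_smul, dotProduct_comm v u, smul_eq_mul]
  ring

private lemma myUpdateEq {n : ℕ} (A : Matrix (Fin n) (Fin n) ℝ) (b : Fin n → ℝ)
    (x : ℕ → Fin n → ℝ) (β : ℕ → ℝ) (k : ℕ) :
    ngmresUpdate A b x β k 0 = x k - (1 + β 0) • residv A b (x k) := by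
  unfold ngmresUpdate qmap residv
  rw [Finset.sum_range_one, Matrix.sub_mulVec, Matrix.one_mulVec]
  ext j
  simp only [Pi.add_apply, Pi.sub_apply, Pi.smul_apply, smul_eq_mul, Nat.sub_zero]
  ring

private lemma myResidSub {n : ℕ} (A : Matrix (Fin n) (Fin n) ℝ) (b y v : Fin n → ℝ) (t : ℝ) :
    residv A b (y - t • v) = residv A b y - t • A.mulVec v := by
  unfold residv
  rw [Matrix.mulVec_sub, Matrix.mulVec_smul]
  abel

private lemma myResidDot {n : ℕ} (A : Matrix (Fin n) (Fin n) ℝ) (b y : Fin n → ℝ) (t : ℝ) :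
    residv A b (y - t • residv A b y) ⬝ᵥ residv A b (y - t • residv A b y)
    = residv A b y ⬝ᵥ residv A b y - 2*t*(residv A b y ⬝ᵥ A.mulVec (residv A b y))
      + t^2*(residv A b y ⬝ᵥ (Aᵀ * A).mulVec (residv A b y)) := by
  rw [myResidSub, myExpand, myAtA]

/-- NGMRES(0) is the Minimal Residual iteration:
`x_{k+1} = x_k - α_k r_k` with `α_k = (r_kᵀ A r_k)/(r_kᵀ Aᵀ A r_k)`, the optimal
coefficient is `β^{(k)} = α_k - 1`, and the first iterate coincides with GMRES. -/
theorem stmt14 (n : ℕ) (A : Matrix (Fin n) (Fin n) ℝ) (b x0 : Fin n → ℝ)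
    (x xG : ℕ → Fin n → ℝ) (β : ℕ → ℕ → ℝ)
    (hNG : IsNGMRES A b x0 (fun _ => 0) x β)
    (hG : IsGMRES A b x0 xG)
    (hnz : ∀ k, residv A b (x k) ⬝ᵥ (Aᵀ * A).mulVec (residv A b (x k)) ≠ 0) :
    (∀ k, x (k + 1) = x k -
        ((residv A b (x k) ⬝ᵥ A.mulVec (residv A b (x k))) /
          (residv A b (x k) ⬝ᵥ (Aᵀ * A).mulVec (residv A b (x k)))) • residv A b (x k)) ∧
    (∀ k, β k 0 = (residv A b (x k) ⬝ᵥ A.mulVec (residv A b (x k))) /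
          (residv A b (x k) ⬝ᵥ (Aᵀ * A).mulVec (residv A b (x k))) - 1) ∧
    x 1 = x0 - ((residv A b x0 ⬝ᵥ A.mulVec (residv A b x0)) /
          (residv A b x0 ⬝ᵥ (Aᵀ * A).mulVec (residv A b x0))) • residv A b x0 ∧
    xG 1 = x 1 := by
  obtain ⟨hx0, hstep⟩ := hNG
  have hspos : ∀ k, 0 < residv A b (x k) ⬝ᵥ (Aᵀ * A).mulVec (residv A b (x k)) := by
    intro k
    have he := myAtA A (residv A b (x k))
    exact lt_of_le_of_ne (by rw [he]; exact myDotSelfNonneg _) (Ne.symm (hnz k))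
  have hbeta : ∀ k, 1 + β k 0 =
      (residv A b (x k) ⬝ᵥ A.mulVec (residv A b (x k))) /
        (residv A b (x k) ⬝ᵥ (Aᵀ * A).mulVec (residv A b (x k))) := by
    intro k
    obtain ⟨hup, hmin⟩ := hstep k
    have hother := hmin (fun _ =>
      (residv A b (x k) ⬝ᵥ A.mulVec (residv A b (x k))) /
        (residv A b (x k) ⬝ᵥ (Aᵀ * A).mulVec (residv A b (x k))) - 1)
    rw [hup, myUpdateEq, myUpdateEq] at hother
    have h2 := myNorm2Le _ _ hother
    simp only [add_sub_cancel] at h2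
    rw [myResidDot, myResidDot] at h2
    exact myQuadMin (hspos k) h2
  have hxx : ∀ k, x (k + 1) = x k -
      ((residv A b (x k) ⬝ᵥ A.mulVec (residv A b (x k))) /
        (residv A b (x k) ⬝ᵥ (Aᵀ * A).mulVec (residv A b (x k)))) • residv A b (x k) := by
    intro k
    rw [(hstep k).1, myUpdateEq, hbeta k]
  have h3 : x 1 = x0 - ((residv A b x0 ⬝ᵥ A.mulVec (residv A b x0)) /
      (residv A b x0 ⬝ᵥ (Aᵀ * A).mulVec (residv A b x0))) • residv A b x0 := by
    have := hxx 0
    rw [hx0] at this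
    simpa using this
  refine ⟨hxx, fun k => by have := hbeta k; linarith, h3, ?_⟩
  obtain ⟨hG0, hGstep⟩ := hG
  obtain ⟨hmem, hGmin⟩ := hGstep 1
  have hs0 : 0 < residv A b x0 ⬝ᵥ (Aᵀ * A).mulVec (residv A b x0) := by
    have := hspos 0; rwa [hx0] at this
  have hset : {v | ∃ i < 1, v = (A ^ i).mulVec (residv A b x0)} = {residv A b x0} := by
    ext v
    constructor
    · rintro ⟨i, hi, rfl⟩
      interval_cases i
      simp [Matrix.one_mulVec]
    · rintro rfl
      exact ⟨0, Nat.zero_lt_one, by simp [Matrix.one_mulVec]⟩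
  have hk : krylov A (residv A b x0) 1 = Submodule.span ℝ {residv A b x0} := by
    unfold krylov; rw [hset]
  rw [hk] at hmem
  obtain ⟨c, hc⟩ := Submodule.mem_span_singleton.mp hmem
  have hxg : xG 1 = x0 - (-c) • residv A b x0 := by
    rw [neg_smul, sub_neg_eq_add, sub_eq_iff_eq_add.mp hc.symm]; abel
  have hx1mem : x 1 - x0 ∈ krylov A (residv A b x0) 1 := by
    rw [hk]
    have hd : x 1 - x0 = (-((residv A b x0 ⬝ᵥ A.mulVec (residv A b x0)) /
        (residv A b x0 ⬝ᵥ (Aᵀ * A).mulVec (residv A b x0)))) • residv A b x0 := by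
      rw [h3, neg_smul]; abel
    rw [hd]
    exact Submodule.smul_mem _ _ (Submodule.mem_span_singleton_self _)
  have hle := hGmin (x 1) hx1mem
  have h2 := myNorm2Le _ _ hle
  rw [hxg, h3, myResidDot, myResidDot] at h2
  have hceq := myQuadMin hs0 h2
  rw [hxg, hceq, h3]


end
end

section
/- Let A ∈ R^{n×n} be real positive definite (i.e., A + Aᵀ is symmetric positive definite, so A is invertible), let μ = λ_min(A + Aᵀ)/2 and ν = λ_min(A^{−1} + (A^{−1})ᵀ)/2. Then for NGMRES with any window size m and any initial guess x_0, the residuals satisfy ‖r_{k+1}‖₂ ≤ √(1 − μν) ‖r_k‖₂ for all k. -/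
open Matrix Filter

noncomputable section

section Aux

open Pointwise

variable {n : ℕ}

lemma dot_self_nonneg' (x : Fin n → ℝ) : 0 ≤ x ⬝ᵥ x :=
  Finset.sum_nonneg fun i _ => mul_self_nonneg _

lemma dot_transpose (B : Matrix (Fin n) (Fin n) ℝ) (v w : Fin n → ℝ) :
    v ⬝ᵥ Bᵀ *ᵥ w = w ⬝ᵥ B *ᵥ v := by
  rw [Matrix.dotProduct_mulVec, Matrix.vecMul_transpose, dotProduct_comm]

/-- Rayleigh lower bound for a real symmetric matrix. -/
lemma rayleigh_lower {S : Matrix (Fin n) (Fin n) ℝ} (hS : S.IsHermitian) (x : Fin n → ℝ) :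
    sInf (spectrum ℝ S) * (x ⬝ᵥ x) ≤ x ⬝ᵥ S *ᵥ x := by
  set c := sInf (spectrum ℝ S) with hc
  have hbdd : BddBelow (spectrum ℝ S) := (Matrix.finite_real_spectrum (A := S)).bddBelow
  have hherm : (S - c • 1).IsHermitian := by
    unfold Matrix.IsHermitian
    rw [Matrix.conjTranspose_sub, hS, Matrix.conjTranspose_smul]
    simp
  have hpsd : (S - c • 1).PosSemidef := by
    refine (Matrix.IsHermitian.posSemidef_iff_eigenvalues_nonneg hherm).mpr fun i =>
      show (0 : ℝ) ≤ _ from ?_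
    have hmem := Matrix.IsHermitian.eigenvalues_mem_spectrum_real hherm i
    have hsp : spectrum ℝ (S - c • 1) = spectrum ℝ S - ({c} : Set ℝ) := by
      have halg : (c • (1 : Matrix (Fin n) (Fin n) ℝ))
          = algebraMap ℝ (Matrix (Fin n) (Fin n) ℝ) c :=
        (Algebra.algebraMap_eq_smul_one c).symm
      rw [halg]
      exact (spectrum.sub_singleton_eq S c).symm
    rw [hsp] at hmem
    obtain ⟨lam, hlam, r, hr, hrl⟩ := hmem
    rw [Set.mem_singleton_iff] at hr
    subst hr
    have h' : lam - c = Matrix.IsHermitian.eigenvalues hherm i := hrl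
    rw [← h']
    have := csInf_le hbdd hlam
    linarith
  have h0 := hpsd.dotProduct_mulVec_nonneg x
  simp only [star_trivial] at h0
  rw [Matrix.sub_mulVec, Matrix.smul_mulVec, Matrix.one_mulVec, dotProduct_sub,
    dotProduct_smul, smul_eq_mul] at h0
  linarith

lemma sInf_spectrum_pos_of_posDef (hn : 0 < n) {S : Matrix (Fin n) (Fin n) ℝ}
    (hS : S.PosDef) : 0 < sInf (spectrum ℝ S) := by
  have hsp := Matrix.IsHermitian.spectrum_real_eq_range_eigenvalues hS.isHermitian
  have hne : (spectrum ℝ S).Nonempty := by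
    rw [hsp]
    have : Nonempty (Fin n) := ⟨⟨0, hn⟩⟩
    exact Set.range_nonempty _
  have hmem := hne.csInf_mem (Matrix.finite_real_spectrum (A := S))
  rw [hsp] at hmem ⊢
  obtain ⟨i, hi⟩ := hmem
  rw [← hi]
  exact hS.eigenvalues_pos i

lemma qmap_eq (A : Matrix (Fin n) (Fin n) ℝ) (b y : Fin n → ℝ) :
    qmap A b y = y - residv A b y := by
  simp only [qmap, residv, Matrix.sub_mulVec, Matrix.one_mulVec]
  abel

lemma residv_sub_smul (A : Matrix (Fin n) (Fin n) ℝ) (b y r : Fin n → ℝ) (α : ℝ) :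
    residv A b (y - α • r) = residv A b y - α • A *ᵥ r := by
  simp only [residv, Matrix.mulVec_sub, Matrix.mulVec_smul]
  abel

end Aux

/-- if `A + Aᵀ` is symmetric positive definite, `μ = λ_min(A + Aᵀ)/2`,
`ν = λ_min(A⁻¹ + (A⁻¹)ᵀ)/2`, then `‖r_{k+1}‖ ≤ √(1 - μν) ‖r_k‖` for NGMRES(m). -/
theorem stmt16 (n : ℕ) (A : Matrix (Fin n) (Fin n) ℝ) (b x0 : Fin n → ℝ)
    (hpd : (A + Aᵀ).PosDef) (m : ℕ)
    (x : ℕ → Fin n → ℝ) (β : ℕ → ℕ → ℝ)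
    (hNG : IsNGMRES A b x0 (fun k => min k m) x β) :
    ∀ k, norm2 (residv A b (x (k + 1))) ≤
      Real.sqrt (1 - (sInf (spectrum ℝ (A + Aᵀ)) / 2) *
          (sInf (spectrum ℝ (A⁻¹ + (A⁻¹)ᵀ)) / 2)) *
        norm2 (residv A b (x k)) := by
  intro k
  set r : Fin n → ℝ := residv A b (x k) with hr_def
  set μ : ℝ := sInf (spectrum ℝ (A + Aᵀ)) / 2 with hμ
  set ν : ℝ := sInf (spectrum ℝ (A⁻¹ + (A⁻¹)ᵀ)) / 2 with hν
  -- the NGMRES minimization beats every candidate `x k - α • r`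
  have hmin : ∀ α : ℝ, norm2 (residv A b (x (k + 1))) ≤ norm2 (r - α • A *ᵥ r) := by
    intro α
    have h := (hNG.2 k).2 (fun i => if i = 0 then α - 1 else 0)
    have hupd : ngmresUpdate A b x (fun i => if i = 0 then α - 1 else 0) k (min k m)
        = x k - α • r := by
      unfold ngmresUpdate
      rw [Finset.sum_eq_single 0]
      · simp only [eq_self_iff_true, if_true, Nat.sub_zero, qmap_eq]
        module
      · intro i _ hi
        simp [hi]
      · intro h0
        exact absurd (Finset.mem_range.mpr (Nat.succ_pos _)) h0
    rw [hupd, residv_sub_smul] at h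
    exact h
  by_cases hr0 : r = 0
  · have h := hmin 0
    rw [hr0] at h ⊢
    simp only [smul_zero, zero_smul, sub_zero] at h
    calc norm2 (residv A b (x (k + 1))) ≤ norm2 (0 : Fin n → ℝ) := h
      _ = 0 := by simp [norm2]
      _ ≤ _ := by
          rw [show norm2 (0 : Fin n → ℝ) = 0 by simp [norm2], mul_zero]
  · -- nontrivial case
    have hn : 0 < n := by
      rcases Nat.eq_zero_or_pos n with h | h
      · exact absurd (funext fun i => absurd i.2 (by omega)) hr0
      · exact h
    -- A is invertible
    have hinj : Function.Injective A.mulVec := by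
      intro u v huv
      by_contra hne
      have hw : u - v ≠ 0 := sub_ne_zero.mpr hne
      have h0 : A *ᵥ (u - v) = 0 := by rw [Matrix.mulVec_sub, huv, sub_self]
      have hpos := hpd.dotProduct_mulVec_pos hw
      simp only [star_trivial, Matrix.add_mulVec, dotProduct_add, h0,
        dotProduct_zero, zero_add, dot_transpose] at hpos
      exact lt_irrefl _ hpos
    have hu : IsUnit A.det :=
      (Matrix.isUnit_iff_isUnit_det A).mp (Matrix.mulVec_injective_iff_isUnit.mp hinj)
    have hAinv : A⁻¹ * A = 1 := Matrix.nonsing_inv_mul A hu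
    have hAinv' : A * A⁻¹ = 1 := Matrix.mul_nonsing_inv A hu
    -- A⁻¹ + (A⁻¹)ᵀ is positive definite
    have hpd2 : (A⁻¹ + (A⁻¹)ᵀ).PosDef := by
      refine Matrix.PosDef.of_dotProduct_mulVec_pos ?_ ?_
      · unfold Matrix.IsHermitian
        rw [Matrix.conjTranspose_add]
        rw [show (A⁻¹)ᴴ = (A⁻¹)ᵀ from rfl, show ((A⁻¹)ᵀ)ᴴ = ((A⁻¹)ᵀ)ᵀ from rfl,
          Matrix.transpose_transpose]
        exact add_comm _ _
      · intro y hy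
        have hz : A⁻¹ *ᵥ y ≠ 0 := by
          intro h0
          apply hy
          have : A *ᵥ (A⁻¹ *ᵥ y) = A *ᵥ 0 := by rw [h0]
          rwa [Matrix.mulVec_mulVec, hAinv', Matrix.one_mulVec, Matrix.mulVec_zero] at this
        set z := A⁻¹ *ᵥ y with hz_def
        have hyz : y = A *ᵥ z := by
          rw [hz_def, Matrix.mulVec_mulVec, hAinv', Matrix.one_mulVec]
        have hpos := hpd.dotProduct_mulVec_pos hz
        simp only [star_trivial, Matrix.add_mulVec, dotProduct_add, dot_transpose] at hpos ⊢
        rw [← hz_def]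
        calc (0:ℝ) < z ⬝ᵥ A *ᵥ z + z ⬝ᵥ A *ᵥ z := hpos
          _ = y ⬝ᵥ z + z ⬝ᵥ y := by
              rw [hyz, dotProduct_comm ((A *ᵥ z)) z]
          _ = y ⬝ᵥ z + y ⬝ᵥ z := by rw [dotProduct_comm z y]
    -- scalar quantities
    set w : Fin n → ℝ := A *ᵥ r with hw_def
    set a : ℝ := r ⬝ᵥ w with ha_def
    set s : ℝ := w ⬝ᵥ w with hs_def
    set rr : ℝ := r ⬝ᵥ r with hrr_def
    have hrr : 0 < rr := by
      rcases lt_or_eq_of_le (dot_self_nonneg' r) with h | h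
      · exact h
      · exact absurd (dotProduct_self_eq_zero.mp h.symm) hr0
    have hμpos : 0 < μ := by
      rw [hμ]
      have := sInf_spectrum_pos_of_posDef hn hpd
      linarith
    have hνpos : 0 < ν := by
      rw [hν]
      have := sInf_spectrum_pos_of_posDef hn hpd2
      linarith
    -- a ≥ μ rr
    have hra : μ * rr ≤ a := by
      have h := rayleigh_lower hpd.1 r
      simp only [Matrix.add_mulVec, dotProduct_add, dot_transpose] at h
      rw [hμ, ha_def, hw_def, hrr_def]
      nlinarith [h]
    have ha_pos : 0 < a := lt_of_lt_of_le (by positivity) hra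
    have hwne : w ≠ 0 := by
      intro h0
      rw [ha_def, h0, dotProduct_zero] at ha_pos
      exact lt_irrefl _ ha_pos
    have hs : 0 < s := by
      rcases lt_or_eq_of_le (dot_self_nonneg' w) with h | h
      · exact h
      · exact absurd (dotProduct_self_eq_zero.mp h.symm) hwne
    -- a ≥ ν s
    have hνa : ν * s ≤ a := by
      have h := rayleigh_lower hpd2.1 w
      simp only [Matrix.add_mulVec, dotProduct_add, dot_transpose] at h
      have hAw : A⁻¹ *ᵥ w = r := by
        rw [hw_def, Matrix.mulVec_mulVec, hAinv, Matrix.one_mulVec]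
      rw [hAw, dotProduct_comm w r] at h
      rw [hν, hs_def, ha_def]
      linarith [h]
    -- optimal step
    set α : ℝ := a / s with hα
    have hdot : (r - α • w) ⬝ᵥ (r - α • w) = rr - a ^ 2 / s := by
      have hexp : (r - α • w) ⬝ᵥ (r - α • w)
          = rr - 2 * α * a + α ^ 2 * s := by
        simp only [sub_dotProduct, dotProduct_sub, smul_dotProduct, dotProduct_smul,
          smul_eq_mul, hrr_def, hs_def, ha_def, dotProduct_comm w r]
        ring
      rw [hexp, hα]
      field_simp
      ring
    have hdotnn : 0 ≤ rr - a ^ 2 / s := hdot ▸ dot_self_nonneg' (r - α • w)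
    have hkey : rr - a ^ 2 / s ≤ (1 - μ * ν) * rr := by
      have h2 : μ * rr * (ν * s) ≤ a * a :=
        mul_le_mul hra hνa (by positivity) (le_of_lt ha_pos)
      have h3 : μ * ν * rr ≤ a ^ 2 / s := by
        rw [le_div_iff₀ hs]
        nlinarith [h2]
      have hre : (1 - μ * ν) * rr = rr - μ * ν * rr := by ring
      rw [hre]
      linarith [h3]
    have h1mn : 0 ≤ 1 - μ * ν := by
      nlinarith [le_trans hdotnn hkey]
    calc norm2 (residv A b (x (k + 1))) ≤ norm2 (r - α • w) := hmin α
      _ = Real.sqrt (rr - a ^ 2 / s) := by rw [norm2, hdot]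
      _ ≤ Real.sqrt ((1 - μ * ν) * rr) := Real.sqrt_le_sqrt hkey
      _ = Real.sqrt (1 - μ * ν) * Real.sqrt rr := Real.sqrt_mul h1mn _
      _ = Real.sqrt (1 - μ * ν) * norm2 r := by rw [norm2, hrr_def]

end
end

section
/- Let A ∈ R^{n×n} be a symmetric positive definite or symmetric negative definite matrix. Then NGMRES with any window size m converges for any initial guess x_0, and the residuals satisfy ‖r_{k+1}‖₂ ≤ (|λ_max(A) − λ_min(A)| / |λ_max(A) + λ_min(A)|) ‖r_k‖₂ for all k. -/
open Matrix Filter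

noncomputable section

namespace Stmt17Aux

open Matrix

lemma dot_self_nonneg {n : ℕ} (v : Fin n → ℝ) : 0 ≤ v ⬝ᵥ v :=
  Finset.sum_nonneg fun _ _ => mul_self_nonneg _

lemma norm2_nonneg {n : ℕ} (v : Fin n → ℝ) : 0 ≤ norm2 v := Real.sqrt_nonneg _

lemma norm_le_norm2 {n : ℕ} (v : Fin n → ℝ) : ‖v‖ ≤ norm2 v := by
  rw [pi_norm_le_iff_of_nonneg (norm2_nonneg v)]
  intro i
  rw [Real.norm_eq_abs, ← Real.sqrt_sq_eq_abs]
  apply Real.sqrt_le_sqrt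
  rw [sq]
  exact Finset.single_le_sum (f := fun j => v j * v j)
    (fun j _ => mul_self_nonneg _) (Finset.mem_univ i)

/-- Key spectral estimate: if `(1 - s λᵢ)² ≤ c²` for all eigenvalues of the symmetric
matrix `A`, then `‖(I - sA) v‖₂ ≤ c ‖v‖₂`. -/
lemma key {n : ℕ} {A : Matrix (Fin n) (Fin n) ℝ} (hA : A.IsHermitian)
    {s c : ℝ} (hc : 0 ≤ c)
    (h : ∀ i, (1 - s * hA.eigenvalues i) ^ 2 ≤ c ^ 2) (v : Fin n → ℝ) :
    norm2 (((1 : Matrix (Fin n) (Fin n) ℝ) - s • A) *ᵥ v) ≤ c * norm2 v := by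
  classical
  set U : Matrix (Fin n) (Fin n) ℝ := (hA.eigenvectorUnitary : Matrix (Fin n) (Fin n) ℝ) with hUdef
  have hU1 : U * star U = 1 := Matrix.mem_unitaryGroup_iff.mp hA.eigenvectorUnitary.2
  have hU2 : star U * U = 1 := Matrix.mem_unitaryGroup_iff'.mp hA.eigenvectorUnitary.2
  have hAeq : A = U * Matrix.diagonal hA.eigenvalues * star U := by
    have := hA.spectral_theorem
    rwa [RCLike.ofReal_real_eq_id, Function.id_comp] at this
  set d : Fin n → ℝ := fun i => 1 - s * hA.eigenvalues i with hddef
  set B : Matrix (Fin n) (Fin n) ℝ := (1 : Matrix (Fin n) (Fin n) ℝ) - s • A with hBdef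
  have hdiag : Matrix.diagonal d = (1 : Matrix (Fin n) (Fin n) ℝ)
      - s • Matrix.diagonal hA.eigenvalues := by
    rw [← Matrix.diagonal_one, ← Matrix.diagonal_smul, ← Matrix.diagonal_sub]
    congr 1
  have hB : B = U * Matrix.diagonal d * star U := by
    rw [hdiag, Matrix.mul_sub, Matrix.sub_mul, Matrix.mul_one, hU1, Matrix.mul_smul,
      Matrix.smul_mul, hBdef, ← hAeq]
  have hBB : B * B = U * Matrix.diagonal (fun i => d i * d i) * star U := by
    rw [hB]
    have h1 : U * Matrix.diagonal d * star U * (U * Matrix.diagonal d * star U)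
        = U * (Matrix.diagonal d * ((star U * U) * (Matrix.diagonal d * star U))) := by
      simp only [Matrix.mul_assoc]
    rw [h1, hU2, Matrix.one_mul, ← Matrix.mul_assoc (Matrix.diagonal d),
      Matrix.diagonal_mul_diagonal, ← Matrix.mul_assoc]
  have hM : c ^ 2 • (1 : Matrix (Fin n) (Fin n) ℝ) - B * B
      = U * Matrix.diagonal (fun i => c ^ 2 - d i * d i) * star U := by
    have hd2 : Matrix.diagonal (fun i => c ^ 2 - d i * d i)
        = c ^ 2 • (1 : Matrix (Fin n) (Fin n) ℝ) - Matrix.diagonal (fun i => d i * d i) := by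
      ext i j
      rcases eq_or_ne i j with rfl | hij
      · simp [Matrix.one_apply_eq]
      · simp [Matrix.diagonal_apply_ne _ hij, Matrix.one_apply_ne hij]
    simp only [hd2, Matrix.mul_sub, Matrix.sub_mul, Matrix.mul_smul, Matrix.smul_mul,
      Matrix.mul_one, hU1, hBB]
  have hPSD : (c ^ 2 • (1 : Matrix (Fin n) (Fin n) ℝ) - B * B).PosSemidef := by
    rw [hM, Matrix.star_eq_conjTranspose]
    exact Matrix.PosSemidef.mul_mul_conjTranspose_same
      (Matrix.PosSemidef.diagonal (fun i => by
        simp only [Pi.zero_apply, hddef, ← pow_two]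
        exact sub_nonneg.mpr (h i))) U
  have hq := hPSD.dotProduct_mulVec_nonneg v
  have hstar : star v = v := by funext i; simp
  have hqq : v ⬝ᵥ ((B * B) *ᵥ v) ≤ c ^ 2 * (v ⬝ᵥ v) := by
    have hmv : (c ^ 2 • (1 : Matrix (Fin n) (Fin n) ℝ) - B * B) *ᵥ v
        = c ^ 2 • v - (B * B) *ᵥ v := by
      rw [Matrix.sub_mulVec, Matrix.smul_mulVec, Matrix.one_mulVec]
    rw [hmv, hstar, dotProduct_sub, dotProduct_smul, smul_eq_mul] at hq
    linarith
  have hBt : Bᵀ = B := by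
    have hAt : Aᵀ = A := by
      have h' := hA
      rwa [Matrix.IsHermitian, Matrix.conjTranspose_eq_transpose_of_trivial] at h'
    rw [hBdef, Matrix.transpose_sub, Matrix.transpose_one, Matrix.transpose_smul, hAt]
  have hdot : v ⬝ᵥ ((B * B) *ᵥ v) = (B *ᵥ v) ⬝ᵥ (B *ᵥ v) := by
    rw [← Matrix.mulVec_mulVec, Matrix.dotProduct_mulVec, ← Matrix.mulVec_transpose, hBt]
  have h1 : (B *ᵥ v) ⬝ᵥ (B *ᵥ v) ≤ c ^ 2 * (v ⬝ᵥ v) := hdot ▸ hqq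
  show Real.sqrt _ ≤ c * Real.sqrt _
  calc Real.sqrt ((B *ᵥ v) ⬝ᵥ (B *ᵥ v)) ≤ Real.sqrt (c ^ 2 * (v ⬝ᵥ v)) := Real.sqrt_le_sqrt h1
    _ = c * Real.sqrt (v ⬝ᵥ v) := by rw [Real.sqrt_mul (sq_nonneg c), Real.sqrt_sq hc]

lemma hermA {n : ℕ} {A : Matrix (Fin n) (Fin n) ℝ} (hdef : A.PosDef ∨ (-A).PosDef) :
    A.IsHermitian := by
  rcases hdef with h | h
  · exact h.1
  · have h1 := h.1
    rw [Matrix.IsHermitian, Matrix.conjTranspose_neg] at h1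
    exact neg_inj.mp h1

lemma eig_neg {n : ℕ} {A : Matrix (Fin n) (Fin n) ℝ} (h : (-A).PosDef)
    (hA : A.IsHermitian) (j : Fin n) : hA.eigenvalues j < 0 := by
  have hw0 : (⇑(hA.eigenvectorBasis j) : Fin n → ℝ) ≠ 0 := by
    have hnz := hA.eigenvectorBasis.orthonormal.ne_zero j
    intro hc
    apply hnz
    ext kk
    exact congrFun hc kk
  have hpos := h.dotProduct_mulVec_pos hw0
  rw [Matrix.neg_mulVec, dotProduct_neg] at hpos
  rw [hA.eigenvalues_eq j]
  simpa using neg_pos.mp hpos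

lemma prod_pos {n : ℕ} {A : Matrix (Fin n) (Fin n) ℝ} (hdef : A.PosDef ∨ (-A).PosDef)
    (hn : 0 < n) : 0 < sSup (spectrum ℝ A) * sInf (spectrum ℝ A) := by
  have hA := hermA hdef
  have hS : spectrum ℝ A = Set.range hA.eigenvalues := hA.spectrum_real_eq_range_eigenvalues
  have hfin : (Set.range hA.eigenvalues).Finite := Set.finite_range _
  have : Nonempty (Fin n) := ⟨⟨0, hn⟩⟩
  have hne : (Set.range hA.eigenvalues).Nonempty := Set.range_nonempty _
  have hLmem : sSup (spectrum ℝ A) ∈ Set.range hA.eigenvalues := by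
    rw [hS]; exact hne.csSup_mem hfin
  have hlmem : sInf (spectrum ℝ A) ∈ Set.range hA.eigenvalues := by
    rw [hS]; exact hne.csInf_mem hfin
  obtain ⟨iL, hiL⟩ := hLmem
  obtain ⟨il, hil⟩ := hlmem
  rcases hdef with h | h
  · have h1 : 0 < hA.eigenvalues iL := h.eigenvalues_pos iL
    have h2 : 0 < hA.eigenvalues il := h.eigenvalues_pos il
    rw [← hiL, ← hil]
    exact mul_pos h1 h2
  · have h1 := eig_neg h hA iL
    have h2 := eig_neg h hA il
    rw [← hiL, ← hil]
    exact mul_pos_of_neg_of_neg h1 h2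

lemma main_bound {n : ℕ} {A : Matrix (Fin n) (Fin n) ℝ} (hdef : A.PosDef ∨ (-A).PosDef)
    (v : Fin n → ℝ) :
    norm2 (((1 : Matrix (Fin n) (Fin n) ℝ)
        - (2 / (sSup (spectrum ℝ A) + sInf (spectrum ℝ A))) • A) *ᵥ v)
      ≤ (|sSup (spectrum ℝ A) - sInf (spectrum ℝ A)|
          / |sSup (spectrum ℝ A) + sInf (spectrum ℝ A)|) * norm2 v := by
  have hA := hermA hdef
  set L := sSup (spectrum ℝ A) with hLdef
  set l := sInf (spectrum ℝ A) with hldef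
  apply key hA (div_nonneg (abs_nonneg _) (abs_nonneg _))
  intro i
  have hn : 0 < n := i.pos
  have hS : spectrum ℝ A = Set.range hA.eigenvalues := hA.spectrum_real_eq_range_eigenvalues
  have hfin : (Set.range hA.eigenvalues).Finite := Set.finite_range _
  have hle1 : l ≤ hA.eigenvalues i := by
    rw [hldef, hS]; exact csInf_le hfin.bddBelow ⟨i, rfl⟩
  have hle2 : hA.eigenvalues i ≤ L := by
    rw [hLdef, hS]; exact le_csSup hfin.bddAbove ⟨i, rfl⟩
  have hprod : 0 < L * l := prod_pos hdef hn
  have hsum : L + l ≠ 0 := by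
    intro hc
    have hl' : l = -L := by linarith
    rw [hl'] at hprod
    nlinarith [sq_nonneg L]
  have h1 : 1 - (2 / (L + l)) * hA.eigenvalues i
      = ((L + l) - 2 * hA.eigenvalues i) / (L + l) := by
    field_simp
  have h2 : (|L - l| / |L + l|) ^ 2 = (L - l) ^ 2 / (L + l) ^ 2 := by
    rw [div_pow, sq_abs, sq_abs]
  have hd2 : (0 : ℝ) < (L + l) ^ 2 := by positivity
  rw [h1, div_pow, h2, div_le_div_iff₀ hd2 hd2]
  nlinarith [mul_nonneg (sub_nonneg.mpr hle1) (sub_nonneg.mpr hle2), sq_nonneg (L + l),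
    mul_nonneg (mul_nonneg (sub_nonneg.mpr hle1) (sub_nonneg.mpr hle2)) hd2.le]

end Stmt17Aux

open Stmt17Aux

/-- for symmetric (positive or negative) definite `A`, NGMRES(m) converges
for any initial guess and
`‖r_{k+1}‖ ≤ (|λ_max - λ_min| / |λ_max + λ_min|) ‖r_k‖`. -/

theorem stmt17 (n : ℕ) (A : Matrix (Fin n) (Fin n) ℝ) (b x0 : Fin n → ℝ)
    (hdef : A.PosDef ∨ (-A).PosDef) (m : ℕ)
    (x : ℕ → Fin n → ℝ) (β : ℕ → ℕ → ℝ)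
    (hNG : IsNGMRES A b x0 (fun k => min k m) x β) :
    (∀ k, norm2 (residv A b (x (k + 1))) ≤
      (|sSup (spectrum ℝ A) - sInf (spectrum ℝ A)| /
        |sSup (spectrum ℝ A) + sInf (spectrum ℝ A)|) * norm2 (residv A b (x k))) ∧
    Filter.Tendsto (fun k => residv A b (x k)) Filter.atTop (nhds 0) := by
  obtain ⟨h0, hstep⟩ := hNG
  set L := sSup (spectrum ℝ A) with hLdef
  set l := sInf (spectrum ℝ A) with hldef
  set c : ℝ := |L - l| / |L + l| with hcdef
  set s : ℝ := 2 / (L + l) with hsdef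
  have hc0 : 0 ≤ c := div_nonneg (abs_nonneg _) (abs_nonneg _)
  have hkey : ∀ k, norm2 (residv A b (x (k + 1))) ≤ c * norm2 (residv A b (x k)) := by
    intro k
    have hopt := (hstep k).2 (fun i => if i = 0 then s - 1 else 0)
    have hupd : ngmresUpdate A b x (fun i => if i = 0 then s - 1 else 0) k (min k m)
        = x k - s • residv A b (x k) := by
      unfold ngmresUpdate
      have hsum0 : ∑ i ∈ Finset.range (min k m + 1),
          (if i = 0 then s - 1 else 0) • (qmap A b (x k) - x (k - i))
          = (s - 1) • (qmap A b (x k) - x k) := by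
        simp only [ite_smul, zero_smul]
        rw [Finset.sum_ite_eq' (Finset.range (min k m + 1)) 0
          (fun i => (s - 1) • (qmap A b (x k) - x (k - i)))]
        simp
      rw [hsum0]
      have hq : qmap A b (x k) = x k - residv A b (x k) := by
        unfold qmap residv
        rw [Matrix.sub_mulVec, Matrix.one_mulVec]
        abel
      rw [hq]
      module
    have hres : residv A b (x k - s • residv A b (x k))
        = ((1 : Matrix (Fin n) (Fin n) ℝ) - s • A) *ᵥ residv A b (x k) := by
      unfold residv
      rw [Matrix.mulVec_sub, Matrix.mulVec_smul, Matrix.sub_mulVec, Matrix.one_mulVec,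
        Matrix.smul_mulVec]
      abel
    calc norm2 (residv A b (x (k + 1)))
        ≤ norm2 (residv A b (ngmresUpdate A b x (fun i => if i = 0 then s - 1 else 0)
            k (min k m))) := hopt
      _ = norm2 (((1 : Matrix (Fin n) (Fin n) ℝ) - s • A) *ᵥ residv A b (x k)) := by
          rw [hupd, hres]
      _ ≤ c * norm2 (residv A b (x k)) := main_bound hdef _
  refine ⟨hkey, ?_⟩
  rcases Nat.eq_zero_or_pos n with hn | hn
  · subst hn
    have hz : (fun k => residv A b (x k)) = fun _ => 0 :=
      funext fun k => Subsingleton.elim _ _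
    rw [hz]
    exact tendsto_const_nhds
  · have hprod : 0 < L * l := prod_pos hdef hn
    have hsum : L + l ≠ 0 := by
      intro hc
      have hl' : l = -L := by linarith
      rw [hl'] at hprod
      nlinarith [sq_nonneg L]
    have hc1 : c < 1 := by
      rw [hcdef, div_lt_one (abs_pos.mpr hsum)]
      nlinarith [abs_nonneg (L - l), abs_nonneg (L + l), sq_abs (L - l), sq_abs (L + l)]
    have hgeo : ∀ k, norm2 (residv A b (x k)) ≤ c ^ k * norm2 (residv A b (x 0)) := by
      intro k
      induction k with
      | zero => simp
      | succ k ih =>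
        calc norm2 (residv A b (x (k + 1))) ≤ c * norm2 (residv A b (x k)) := hkey k
          _ ≤ c * (c ^ k * norm2 (residv A b (x 0))) := by
              exact mul_le_mul_of_nonneg_left ih hc0
          _ = c ^ (k + 1) * norm2 (residv A b (x 0)) := by ring
    apply squeeze_zero_norm (fun k => (norm_le_norm2 _).trans (hgeo k))
    have ht := (tendsto_pow_atTop_nhds_zero_of_lt_one hc0 hc1).mul_const
      (norm2 (residv A b (x 0)))
    simpa using ht


end
end
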